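/- arXiv:1710.06037 — 3 statements merged into one kernel-verified Lean document; each statement's English description precedes it below -/
import Mathlib

section
/- A Hamilton cycle H in L(X) is Euler tour compatible (i.e., corresponds to an Euler tour of X) if and only if for every vertex uv of L(X), one of the two neighbours of uv in H lies in the u-neighbourhood of uv and the other lies in the v-neighbourhood of uv. -/
open SimpleGraph
open scoped Classical

universe u v'

variable {V : Type*}

/-- `G` is regular of degree `k`. -/
def RegularDeg (G : SimpleGraph V) (k : ℕ) : Prop :=
  ∀ v, Nat.card (G.neighborSet v) = k

/-- A family of `n` pairwise edge-disjoint Hamilton cycles in `G`. -/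
def IsHamDecompFam (G : SimpleGraph V) {n : ℕ} (x : Fin n → V)
    (c : ∀ i, G.Walk (x i) (x i)) : Prop :=
  (∀ i, (c i).IsHamiltonianCycle) ∧
    ∀ i j, i ≠ j → ∀ e, e ∈ (c i).edges → e ∉ (c j).edges

/-- `G` contains `n` pairwise edge-disjoint Hamilton cycles. -/
def EdgeDisjointHamCycles (G : SimpleGraph V) (n : ℕ) : Prop :=
  ∃ (x : Fin n → V) (c : ∀ i, G.Walk (x i) (x i)), IsHamDecompFam G x c

/-- A graph regular of degree `2k` or `2k+1` is Hamilton decomposable if it contains a set of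
`k` pairwise edge-disjoint Hamilton cycles. -/
def HamiltonDecomposable (G : SimpleGraph V) : Prop :=
  ∃ k : ℕ, (RegularDeg G (2 * k) ∨ RegularDeg G (2 * k + 1)) ∧ EdgeDisjointHamCycles G k

/-- A multigraph: a vertex type, an edge type, and an assignment of (unordered) endpoints. -/
structure Multigraph : Type (max (u + 1) (v' + 1)) where
  V : Type u
  E : Type v'
  ends : E → Sym2 V

namespace Multigraph

variable (M : Multigraph)

/-- `M` has no loops. -/
def Loopless : Prop := ∀ e, ¬ (M.ends e).IsDiag

/-- The degree of a vertex of a (loopless) multigraph: number of incident edges. -/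
noncomputable def deg (v : M.V) : ℕ := Nat.card {e : M.E // v ∈ M.ends e}

/-- `M` is `k`-regular. -/
def Regular (k : ℕ) : Prop := ∀ v, M.deg v = k

/-- The underlying simple graph of `M`: adjacency given by existence of a connecting edge. -/
def toSG : SimpleGraph M.V where
  Adj x y := x ≠ y ∧ ∃ e, M.ends e = s(x, y)
  symm := ⟨by
    rintro x y ⟨hxy, e, he⟩
    exact ⟨hxy.symm, e, he.trans (Sym2.eq_swap)⟩⟩
  loopless := ⟨fun x h => h.1 rfl⟩

/-- `M` is connected. -/
def Connected : Prop := M.toSG.Connected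

/-- The line graph of a multigraph: vertices are edges, adjacency is sharing an endpoint. -/
def lineSG : SimpleGraph M.E where
  Adj e f := e ≠ f ∧ ∃ w, w ∈ M.ends e ∧ w ∈ M.ends f
  symm := ⟨by rintro e f ⟨hef, w, h1, h2⟩; exact ⟨hef.symm, w, h2, h1⟩⟩
  loopless := ⟨fun e h => h.1 rfl⟩

/-- A transition at a vertex `u`: a pair of (distinct) half-edges incident with `u`
(in a loopless multigraph, a pair of distinct edges incident with `u`). -/
structure Transition (M : Multigraph) where
  u : M.V
  e₁ : M.E
  e₂ : M.E
  ne : e₁ ≠ e₂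
  mem₁ : u ∈ M.ends e₁
  mem₂ : u ∈ M.ends e₂

/-- Endpoints of edges after splitting the vertex `t.u` into two vertices: the new vertex
`Sum.inr ()` receives the two half-edges of the transition `t`, and `Sum.inl t.u` keeps the
remaining half-edges at `t.u`. -/
noncomputable def splitEnds (t : M.Transition) (e : M.E) : Sym2 (M.V ⊕ Unit) :=
  if e = t.e₁ ∨ e = t.e₂ then
    Sym2.map (fun w => if w = t.u then Sum.inr () else Sum.inl w) (M.ends e)
  else Sym2.map Sum.inl (M.ends e)

/-- The multigraph `M^t` obtained by splitting at the transition `t`. -/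
noncomputable def split (t : M.Transition) : Multigraph where
  V := M.V ⊕ Unit
  E := M.E
  ends := M.splitEnds t

/-- A transition is separating if splitting at it increases the number of
connected components. -/
def IsSeparating (t : M.Transition) : Prop :=
  Nat.card (M.split t).toSG.ConnectedComponent > Nat.card M.toSG.ConnectedComponent

end Multigraph

/-- The multigraph underlying a simple graph. -/
def SimpleGraph.toMulti (G : SimpleGraph V) : Multigraph := ⟨V, G.edgeSet, Subtype.val⟩

/-- `G` has no separating transitions. -/
def NoSeparatingTransition (G : SimpleGraph V) : Prop :=
  ∀ t : Multigraph.Transition G.toMulti, ¬ G.toMulti.IsSeparating t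

namespace EulerAux
variable {V : Type*} {G : SimpleGraph V}

theorem support_eq_range_map {u v : V} (p : G.Walk u v) :
    p.support = (List.range (p.length + 1)).map p.getVert := by
  induction p with
  | nil => simp [Walk.getVert]
  | cons h q ih =>
    rw [Walk.support_cons, Walk.length_cons, List.range_succ_eq_map]
    simp only [List.map_cons, List.map_map]
    refine congrArg₂ _ rfl ?_
    rw [ih]; rfl

theorem edges_eq_range_map {u v : V} (p : G.Walk u v) :
    p.edges = (List.range p.length).map (fun i => s(p.getVert i, p.getVert (i + 1))) := by
  induction p with
  | nil => simp
  | cons h q ih =>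
    rw [Walk.edges_cons, Walk.length_cons, List.range_succ_eq_map]
    simp only [List.map_cons, List.map_map]
    refine congrArg₂ _ ?_ ?_
    · simp [Walk.getVert_cons_succ]
    · rw [ih]; rfl

theorem exists_walk_of_chain (n : ℕ) (f : ℕ → V) (h : ∀ i < n, G.Adj (f i) (f (i + 1))) :
    ∃ p : G.Walk (f 0) (f n), p.edges = (List.range n).map (fun i => s(f i, f (i + 1))) := by
  induction n with
  | zero => exact ⟨Walk.nil, by simp⟩
  | succ n ih =>
    obtain ⟨p, hp⟩ := ih (fun i hi => h i (by omega))
    exact ⟨p.concat (h n (by omega)),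
      by rw [Walk.edges_concat, hp, List.range_succ, List.map_append]; simp⟩

end EulerAux

namespace EulerCore
open EulerAux
variable {W : Type*} {X : SimpleGraph W} {a : X.edgeSet} (c : X.lineGraph.Walk a a)

/-- The cyclic sequence of vertices (edges of `X`) along the tail of `c`. -/
noncomputable def cF (k : ℕ) : X.edgeSet := c.getVert (k % c.length + 1)

theorem cF_mod (k : ℕ) : cF c (k % c.length) = cF c k := by
  simp [cF, Nat.mod_mod_of_dvd, Nat.mod_mod]

theorem cF_period (k : ℕ) : cF c (k + c.length) = cF c k := by
  simp [cF, Nat.add_mod_right]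

theorem cF_eq_getVert {k : ℕ} (hk : k < c.length) : cF c k = c.getVert (k + 1) := by
  simp [cF, Nat.mod_eq_of_lt hk]

theorem tail_eq_map_cF : c.support.tail = (List.range c.length).map (cF c) := by
  rw [support_eq_range_map, List.range_succ_eq_map, List.map_cons, List.tail_cons, List.map_map]
  refine List.map_congr_left fun i hi => ?_
  rw [Function.comp_apply, cF_eq_getVert c (List.mem_range.mp hi)]

variable {c} (hc : c.IsHamiltonianCycle)
include hc

theorem hm3 : 3 ≤ c.length := hc.isCycle.three_le_length

theorem nodup_map_cF : ((List.range c.length).map (cF c)).Nodup := by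
  rw [← tail_eq_map_cF]; exact hc.isCycle.support_nodup

theorem cF_inj {j k : ℕ} (hj : j < c.length) (hk : k < c.length) (h : cF c j = cF c k) :
    j = k := by
  have hnd := nodup_map_cF hc
  rw [List.nodup_map_iff_inj_on List.nodup_range] at hnd
  exact hnd j (List.mem_range.mpr hj) k (List.mem_range.mpr hk) h

theorem cF_surj (z : X.edgeSet) : ∃ k < c.length, cF c k = z := by
  have hz : z ∈ c.support.tail := by
    rw [← Walk.support_tail_of_not_nil c hc.isCycle.not_nil]
    exact hc.isHamiltonian_tail.mem_support z
  rw [tail_eq_map_cF] at hz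
  obtain ⟨k, hk, hkz⟩ := List.mem_map.mp hz
  exact ⟨k, List.mem_range.mp hk, hkz⟩

theorem gV_inj {p q : ℕ} (hp1 : 1 ≤ p) (hp2 : p ≤ c.length) (hq1 : 1 ≤ q) (hq2 : q ≤ c.length)
    (h : c.getVert p = c.getVert q) : p = q := by
  have := cF_inj hc (j := p - 1) (k := q - 1) (by omega) (by omega)
  rw [cF_eq_getVert c (by omega), cF_eq_getVert c (by omega)] at this
  have h' := this (by rw [Nat.sub_add_cancel hp1, Nat.sub_add_cancel hq1]; exact h)
  omega

theorem cF_succ_mem_edges (k : ℕ) : s(cF c k, cF c (k + 1)) ∈ c.edges := by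
  have hm := hm3 hc
  have hk : k % c.length < c.length := Nat.mod_lt _ (by omega)
  have h1 : cF c (k + 1) = c.getVert ((k % c.length + 1) % c.length + 1) := by
    have h2 : (k + 1) % c.length = (k % c.length + 1) % c.length := by
      conv_lhs => rw [Nat.add_mod]
      rw [Nat.mod_eq_of_lt (show 1 < c.length by omega)]
    simp only [cF, h2]
  rw [edges_eq_range_map]
  by_cases h : k % c.length + 1 < c.length
  · refine List.mem_map.mpr ⟨k % c.length + 1, List.mem_range.mpr h, ?_⟩
    rw [← cF_mod c k, cF_eq_getVert c hk, h1, Nat.mod_eq_of_lt h]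
  · have hkm : k % c.length + 1 = c.length := by omega
    refine List.mem_map.mpr ⟨0, List.mem_range.mpr (by omega), ?_⟩
    have e1 : cF c k = c.getVert 0 := by
      rw [← cF_mod c k, cF_eq_getVert c hk, hkm, Walk.getVert_length, Walk.getVert_zero]
    have e2 : cF c (k + 1) = c.getVert (0 + 1) := by
      rw [h1, hkm, Nat.mod_self]
    rw [e1, e2]

theorem cF_adj (k : ℕ) : X.lineGraph.Adj (cF c k) (cF c (k + 1)) :=
  c.adj_of_mem_edges (cF_succ_mem_edges hc k)

omit hc in
theorem cF_key {x y : ℕ} (h : x % c.length = y % c.length) : cF c x = cF c y := by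
  rw [← cF_mod c x, h, cF_mod]

omit hc in
theorem cF_shift (k d : ℕ) : cF c (k + d) = cF c (k % c.length + d) := by
  apply cF_key
  conv_lhs => rw [Nat.add_mod]
  conv_rhs => rw [Nat.add_mod, Nat.mod_mod]

theorem cF_ne (k : ℕ) : cF c (k + (c.length - 1)) ≠ cF c (k + 1) := by
  have hm := hm3 hc
  intro h
  have h2 : (k + (c.length - 1)) % c.length = (k + 1) % c.length :=
    cF_inj hc (Nat.mod_lt _ (by omega)) (Nat.mod_lt _ (by omega))
      (by rw [cF_mod, cF_mod]; exact h)
  have h3 : (k + 1) ≡ (k + (c.length - 1)) [MOD c.length] := h2.symm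
  rw [Nat.modEq_iff_dvd' (by omega)] at h3
  have h4 : k + (c.length - 1) - (k + 1) = c.length - 2 := by omega
  rw [h4] at h3
  have := Nat.le_of_dvd (by omega) h3
  omega

theorem cF_nbhd (k : ℕ) :
    {z : X.edgeSet | s(cF c k, z) ∈ c.edges} =
      {cF c (k + (c.length - 1)), cF c (k + 1)} := by
  have hm := hm3 hc
  have hj : k % c.length < c.length := Nat.mod_lt _ (by omega)
  have hck : cF c k = c.getVert (k % c.length + 1) := by
    rw [← cF_mod c k, cF_eq_getVert c hj]
  have hgv0 : c.getVert c.length = c.getVert 0 := by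
    rw [Walk.getVert_length, Walk.getVert_zero]
  ext z
  simp only [Set.mem_setOf_eq, Set.mem_insert_iff, Set.mem_singleton_iff]
  constructor
  · intro hmem
    rw [edges_eq_range_map] at hmem
    obtain ⟨i, hi, hie⟩ := List.mem_map.mp hmem
    rw [List.mem_range] at hi
    rw [Sym2.eq_iff] at hie
    rcases hie with ⟨h1, h2⟩ | ⟨h1, h2⟩
    <;> replace h1 := h1.symm <;> replace h2 := h2.symm
    · -- cF c k = getVert i, z = getVert (i+1)
      rw [hck] at h1
      rcases Nat.eq_zero_or_pos i with hi0 | hi1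
      · subst hi0
        rw [← hgv0] at h1
        have hkm : k % c.length + 1 = c.length :=
          gV_inj hc (by omega) (by omega) (by omega) le_rfl h1
        refine Or.inr ?_
        have e : cF c (k + 1) = c.getVert (0 + 1) := by
          rw [cF_shift (c := c) k 1, hkm, ← Nat.zero_add c.length, cF_period,
            cF_eq_getVert c (by omega)]
        rw [e]; exact h2
      · have hji : k % c.length + 1 = i :=
          gV_inj hc (by omega) (by omega) (by omega) (by omega) h1
        refine Or.inr ?_
        have e : cF c (k + 1) = c.getVert (i + 1) := by
          rw [cF_shift (c := c) k 1, cF_eq_getVert c (by omega : k % c.length + 1 < c.length),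
            hji]
        rw [e]; exact h2
    · -- cF c k = getVert (i+1), z = getVert i
      have htmp := h1; replace h1 := h2; replace h2 := htmp
      rw [hck] at h1
      have hji : k % c.length = i := by
        have := gV_inj hc (by omega) (by omega) (by omega) (by omega) h1
        omega
      refine Or.inl ?_
      rcases Nat.eq_zero_or_pos i with hi0 | hi1
      · have e : cF c (k + (c.length - 1)) = c.getVert c.length := by
          rw [cF_shift (c := c) k (c.length - 1), hji, hi0, Nat.zero_add,
            cF_eq_getVert c (by omega)]
          congr 1
          omega
        rw [e, hgv0, ← hi0]
        exact h2
      · have e : cF c (k + (c.length - 1)) = c.getVert i := by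
          rw [cF_shift (c := c) k (c.length - 1), hji,
            show i + (c.length - 1) = (i - 1) + c.length by omega, cF_period,
            cF_eq_getVert c (by omega)]
          congr 1
          omega
        rw [e]; exact h2
  · rintro (rfl | rfl)
    · have hmm := cF_succ_mem_edges hc (k + (c.length - 1))
      have he : k + (c.length - 1) + 1 = k + c.length := by omega
      rw [he, cF_period] at hmm
      rw [Sym2.eq_swap]
      exact hmm
    · exact cF_succ_mem_edges hc k

end EulerCore

/-- A Hamilton cycle `c` of `L(X)` is *Euler tour compatible at* the vertex `E = uv` of `L(X)`
if one of the two neighbours of `E` on `c` lies in the `u`-neighbourhood of `E` (the edges of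
`X` at `u` other than `E`) and the other lies in the `v`-neighbourhood of `E`. -/
def CompatAt {W : Type*} {X : SimpleGraph W} {a : X.edgeSet} (c : X.lineGraph.Walk a a)
    (E : X.edgeSet) (u v : W) : Prop :=
  ∃ f g : X.edgeSet, f ≠ g ∧ {h : X.edgeSet | s(E, h) ∈ c.edges} = {f, g} ∧
    u ∈ (f : Sym2 W) ∧ v ∈ (g : Sym2 W)

/-- A Hamilton cycle of `L(X)` is *Euler tour compatible* if it corresponds to an Euler tour
of `X`, i.e. its cyclic sequence of vertices is the sequence of edges of an Euler tour. -/
def EulerTourCompatible {W : Type*} {X : SimpleGraph W} {a : X.edgeSet}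
    (c : X.lineGraph.Walk a a) : Prop :=
  ∃ (x : W) (p : X.Walk x x), p.IsEulerian ∧ (c.support.map Subtype.val).tail ~r p.edges

namespace EulerCore
open EulerAux
variable {W : Type*} {X : SimpleGraph W} {a : X.edgeSet} {c : X.lineGraph.Walk a a}
  (hc : c.IsHamiltonianCycle)
include hc

theorem euler_of_compat
    (hyp : ∀ (u v : W) (E : X.edgeSet), (E : Sym2 W) = s(u, v) → CompatAt c E u v) :
    EulerTourCompatible c := by
  have hm := hm3 hc
  have hsh : ∀ j : ℕ, ∃ w : W, w ∈ (cF c j : Sym2 W) ∧ w ∈ (cF c (j + 1) : Sym2 W) :=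
    fun j => (lineGraph_adj_iff_exists.mp (cF_adj hc j)).2
  set t : ℕ → W := fun j => Classical.choose (hsh (j % c.length)) with htdef
  have ht : ∀ j, t j ∈ (cF c j : Sym2 W) ∧ t j ∈ (cF c (j + 1) : Sym2 W) := by
    intro j
    obtain ⟨h1, h2⟩ := Classical.choose_spec (hsh (j % c.length))
    constructor
    · rw [← cF_mod c j]; exact h1
    · rw [show cF c (j + 1) = cF c (j % c.length + 1) from cF_shift (c := c) j 1]; exact h2
  have ht_per : ∀ j, t (j + c.length) = t j := fun j => by
    simp only [htdef, Nat.add_mod_right]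
  have hne : ∀ j, cF c j ≠ cF c (j + 1) := fun j => (cF_adj hc j).ne
  have claim : ∀ j, (cF c (j + 1) : Sym2 W) = s(t j, t (j + 1)) := by
    intro j
    obtain ⟨⟨u, v⟩, huv'⟩ := Quot.exists_rep (cF c (j + 1) : Sym2 W)
    have huv : (cF c (j + 1) : Sym2 W) = s(u, v) := huv'.symm
    have hEne : u ≠ v := by
      intro h
      exact X.not_isDiag_of_mem_edgeSet (cF c (j + 1)).prop
        (by rw [huv, h]; exact Sym2.mk_isDiag_iff.mpr rfl)
    obtain ⟨f, g, hfg, hset, hu, hv⟩ := hyp u v (cF c (j + 1)) huv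
    have hnb := cF_nbhd hc (j + 1)
    rw [show j + 1 + (c.length - 1) = j + c.length by omega, cF_period, hset] at hnb
    have hfmem : f = cF c j ∨ f = cF c (j + 2) := by
      have : f ∈ ({cF c j, cF c (j + 2)} : Set X.edgeSet) := by
        rw [← hnb]; exact Set.mem_insert _ _
      simpa using this
    have hgmem : g = cF c j ∨ g = cF c (j + 2) := by
      have : g ∈ ({cF c j, cF c (j + 2)} : Set X.edgeSet) := by
        rw [← hnb]; exact Set.mem_insert_iff.mpr (Or.inr rfl)
      simpa using this
    have hne1 : cF c j ≠ cF c (j + 1) := hne j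
    have hne2 : cF c (j + 2) ≠ cF c (j + 1) := (hne (j + 1)).symm
    have htj2 : t j ∈ (cF c (j + 1) : Sym2 W) := (ht j).2
    have htj3 : t (j + 1) ∈ (cF c (j + 1) : Sym2 W) := (ht (j + 1)).1
    have htne : t j ≠ t (j + 1) := by
      intro he
      have hzj : t j ∈ (cF c j : Sym2 W) := (ht j).1
      have hzj2 : t j ∈ (cF c (j + 2) : Sym2 W) := he ▸ (ht (j + 1)).2
      have hzf : t j ∈ (f : Sym2 W) := by rcases hfmem with h | h <;> rw [h] <;> assumption
      have hzg : t j ∈ (g : Sym2 W) := by rcases hgmem with h | h <;> rw [h] <;> assumption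
      have hz : t j = u ∨ t j = v := Sym2.mem_iff.mp (huv ▸ htj2)
      rcases hz with hz | hz
      · have hgE : (g : Sym2 W) = s(u, v) := (Sym2.mem_and_mem_iff hEne).mp ⟨hz ▸ hzg, hv⟩
        have : g = cF c (j + 1) := Subtype.ext (hgE.trans huv.symm)
        rcases hgmem with h | h
        · exact hne1 (h ▸ this)
        · exact hne2 (h ▸ this)
      · have hfE : (f : Sym2 W) = s(u, v) := (Sym2.mem_and_mem_iff hEne).mp ⟨hu, hz ▸ hzf⟩
        have : f = cF c (j + 1) := Subtype.ext (hfE.trans huv.symm)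
        rcases hfmem with h | h
        · exact hne1 (h ▸ this)
        · exact hne2 (h ▸ this)
    have h1 : t j = u ∨ t j = v := Sym2.mem_iff.mp (huv ▸ htj2)
    have h2 : t (j + 1) = u ∨ t (j + 1) = v := Sym2.mem_iff.mp (huv ▸ htj3)
    rw [huv]
    rcases h1 with h1 | h1 <;> rcases h2 with h2 | h2
    · exact absurd (h1.trans h2.symm) htne
    · rw [h1, h2]
    · rw [h1, h2]; exact Sym2.eq_swap
    · exact absurd (h1.trans h2.symm) htne
  set g' : ℕ → W := fun k => t (k + (c.length - 1)) with hg'def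
  have hcl : ∀ k, (cF c k : Sym2 W) = s(g' k, g' (k + 1)) := by
    intro k
    have h := claim (k + (c.length - 1))
    rw [show k + (c.length - 1) + 1 = k + c.length by omega, cF_period] at h
    rw [h]
    have : g' (k + 1) = t (k + c.length) := by
      simp only [hg'def]
      congr 1
      omega
    rw [this]
  have hadj : ∀ k, k < c.length → X.Adj (g' k) (g' (k + 1)) := by
    intro k _
    exact X.mem_edgeSet.mp ((hcl k) ▸ (cF c k).prop)
  obtain ⟨p₀, hp₀⟩ := exists_walk_of_chain c.length g' hadj
  have hg'm : g' c.length = g' 0 := by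
    show t (c.length + (c.length - 1)) = t (0 + (c.length - 1))
    rw [Nat.zero_add, Nat.add_comm, ht_per]
  have hedges : (p₀.copy rfl hg'm).edges
      = (List.range c.length).map (fun k => (cF c k : Sym2 W)) := by
    rw [Walk.edges_copy, hp₀]
    refine List.map_congr_left fun k _ => ?_
    exact (hcl k).symm
  refine ⟨g' 0, p₀.copy rfl hg'm, ?_, ?_⟩
  · intro e he
    rw [hedges]
    have hnd : ((List.range c.length).map (fun k => (cF c k : Sym2 W))).Nodup := by
      have h1 : ((List.range c.length).map (cF c)).map Subtype.val
          = (List.range c.length).map (fun k => (cF c k : Sym2 W)) := by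
        rw [List.map_map]; rfl
      rw [← h1]
      exact (nodup_map_cF hc).map Subtype.val_injective
    apply List.count_eq_one_of_mem hnd
    obtain ⟨k, hk, hkF⟩ := cF_surj hc ⟨e, he⟩
    exact List.mem_map.mpr ⟨k, List.mem_range.mpr hk, by rw [hkF]⟩
  · have heq : (c.support.map Subtype.val).tail = (p₀.copy rfl hg'm).edges := by
      rw [hedges]
      have h2 : (c.support.map Subtype.val).tail = c.support.tail.map Subtype.val := by
        cases hs : c.support <;> simp
      rw [h2, tail_eq_map_cF, List.map_map]
      rfl
    rw [heq]

theorem compat_of_euler (het : EulerTourCompatible c) :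
    ∀ (u v : W) (E : X.edgeSet), (E : Sym2 W) = s(u, v) → CompatAt c E u v := by
  obtain ⟨x, p, hp, hrot⟩ := het
  have hm := hm3 hc
  have hL : (c.support.map Subtype.val).tail
      = (List.range c.length).map (fun k => (cF c k : Sym2 W)) := by
    have h2 : (c.support.map Subtype.val).tail = c.support.tail.map Subtype.val := by
      cases c.support <;> simp
    rw [h2, tail_eq_map_cF, List.map_map]
    rfl
  rw [hL] at hrot
  obtain ⟨n, hn⟩ := hrot
  have hlen : p.edges.length = c.length := by
    rw [← hn]
    simp
  have hplen : p.length = c.length := by rw [← Walk.length_edges, hlen]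
  have hidx : ∀ j, (hj : j < c.length) →
      p.edges[j]'(by rw [hlen]; exact hj) = (cF c (j + n) : Sym2 W) := by
    intro j hj
    rw [List.getElem_of_eq hn.symm (by rw [hlen]; exact hj), List.getElem_rotate]
    simp only [List.length_map, List.length_range]
    rw [List.getElem_map, List.getElem_range]
    exact congrArg _ (cF_mod c (j + n))
  have hxv : ∀ j, (hj : j < c.length) →
      p.edges[j]'(by rw [hlen]; exact hj) = s(p.getVert j, p.getVert (j + 1)) := by
    intro j hj
    rw [List.getElem_of_eq (edges_eq_range_map p) (by rw [hlen]; exact hj),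
      List.getElem_map, List.getElem_range]
  intro u v E hE
  -- locate E in p.edges
  have hEmem : (E : Sym2 W) ∈ p.edges := hp.mem_edges_iff.mpr E.prop
  obtain ⟨j, hj', hjE⟩ := List.getElem_of_mem hEmem
  have hj : j < c.length := by rw [← hlen]; exact hj'
  have hFE : cF c (j + n) = E := Subtype.val_injective (by rw [← hidx j hj]; exact hjE)
  have hEgv : (E : Sym2 W) = s(p.getVert j, p.getVert (j + 1)) := by
    rw [← hjE]; exact hxv j hj
  -- the two neighbours
  set A := cF c (j + n + (c.length - 1)) with hA
  set B := cF c (j + n + 1) with hB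
  have hABne : A ≠ B := cF_ne hc (j + n)
  have hset : {z : X.edgeSet | s(E, z) ∈ c.edges} = {A, B} := by
    rw [← hFE]
    exact cF_nbhd hc (j + n)
  -- getVert wraparound
  have hgv0 : p.getVert c.length = p.getVert 0 := by
    rw [← hplen, Walk.getVert_length, Walk.getVert_zero]
  have hAmem : p.getVert j ∈ (A : Sym2 W) := by
    rcases Nat.eq_zero_or_pos j with hj0 | hj1
    · have e1 : A = cF c ((c.length - 1) + n) := by
        rw [hA, hj0]
        exact congrArg _ (by omega)
      have e2 : (cF c ((c.length - 1) + n) : Sym2 W)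
          = s(p.getVert (c.length - 1), p.getVert (c.length - 1 + 1)) := by
        rw [← hidx (c.length - 1) (by omega), hxv (c.length - 1) (by omega)]
      rw [e1, e2, show c.length - 1 + 1 = c.length by omega, hgv0, hj0]
      exact Sym2.mem_mk_right _ _
    · have e1 : A = cF c ((j - 1) + n) := by
        rw [hA, show j + n + (c.length - 1) = ((j - 1) + n) + c.length by omega, cF_period]
      have e2 : (cF c ((j - 1) + n) : Sym2 W)
          = s(p.getVert (j - 1), p.getVert (j - 1 + 1)) := by
        rw [← hidx (j - 1) (by omega), hxv (j - 1) (by omega)]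
      rw [e1, e2, show j - 1 + 1 = j by omega]
      exact Sym2.mem_mk_right _ _
  have hBmem : p.getVert (j + 1) ∈ (B : Sym2 W) := by
    rcases Nat.lt_or_ge (j + 1) c.length with hj1 | hj1
    · have e1 : B = cF c ((j + 1) + n) := by
        rw [hB]
        exact congrArg _ (by omega)
      have e2 : (B : Sym2 W) = s(p.getVert (j + 1), p.getVert (j + 1 + 1)) := by
        rw [e1, ← hidx (j + 1) hj1, hxv (j + 1) hj1]
      rw [e2]
      exact Sym2.mem_mk_left _ _
    · have hjm : j + 1 = c.length := by omega
      have e1 : B = cF c (0 + n) := by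
        rw [hB, show j + n + 1 = (0 + n) + c.length by omega, cF_period]
      have e2 : (B : Sym2 W) = s(p.getVert 0, p.getVert 1) := by
        rw [e1, ← hidx 0 (by omega), hxv 0 (by omega)]
      rw [e2, hjm, hgv0]
      exact Sym2.mem_mk_left _ _
  -- match endpoints
  rw [hE] at hEgv
  rw [Sym2.eq_iff] at hEgv
  rcases hEgv with ⟨h1, h2⟩ | ⟨h1, h2⟩
  · exact ⟨A, B, hABne, hset, h1 ▸ hAmem, h2 ▸ hBmem⟩
  · exact ⟨B, A, hABne.symm, hset.trans (Set.pair_comm A B), h1 ▸ hBmem, h2 ▸ hAmem⟩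

end EulerCore


/-- A Hamilton cycle `c` in `L(X)` is Euler tour compatible if and only if
for every vertex `uv` of `L(X)`, one of the two neighbours of `uv` on `c` lies in the
`u`-neighbourhood of `uv` and the other lies in the `v`-neighbourhood of `uv`. -/
theorem euler_tour_compatible_iff_compat_everywhere {W : Type*} (X : SimpleGraph W)
    {a : X.edgeSet} (c : X.lineGraph.Walk a a) (hc : c.IsHamiltonianCycle) :
    EulerTourCompatible c ↔
      ∀ (u v : W) (E : X.edgeSet), (E : Sym2 W) = s(u, v) → CompatAt c E u v :=
  ⟨fun h => EulerCore.compat_of_euler hc h, fun h => EulerCore.euler_of_compat hc h⟩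
end

section
/- Let k ≥ 4 and let X be the complete graph K_{k+1} with distinguished vertices v, u_1, u_2, u_3. For i = 1, 2, 3, let X'_i be a copy of K_{k+1} with an edge u'_i v'_i, and insert X'_i − u'_i v'_i into the edge u_i v of X. The resulting graph Y is a simple k-regular graph that has no Hamilton cycle. -/
open SimpleGraph
open scoped Classical

universe u v'

variable {V : Type*}

/-- The graph `Y` of the theorem: a complete graph `K_{k+1}` with distinguished vertices
`v, u 0, u 1, u 2`, with a copy of `K_{k+1}` minus the edge `{0, 1}` inserted into each of
the three edges `v (u i)`: the edge `v (u i)` and the edge `{0, 1}` of the `i`-th copy are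
replaced by an edge from `u i` to the vertex `(i, 0)` and an edge from `v` to `(i, 1)`. -/
def Ygraph (k : ℕ) (v : Fin (k + 1)) (u : Fin 3 → Fin (k + 1)) :
    SimpleGraph (Fin (k + 1) ⊕ Fin 3 × Fin (k + 1)) :=
  SimpleGraph.fromRel (fun x y =>
    match x, y with
    | Sum.inl a, Sum.inl b => ∀ i : Fin 3, s(a, b) ≠ s(v, u i)
    | Sum.inr (i, a), Sum.inr (j, b) => i = j ∧ s(a, b) ≠ s((0 : Fin (k + 1)), 1)
    | Sum.inl a, Sum.inr (i, b) => (a = u i ∧ b = 0) ∨ (a = v ∧ b = 1)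
    | _, _ => False)

section AuxProof

lemma Yadj_inl_inl {k : ℕ} {v : Fin (k+1)} {u : Fin 3 → Fin (k+1)} {a b : Fin (k+1)} :
    (Ygraph k v u).Adj (Sum.inl a) (Sum.inl b) ↔ a ≠ b ∧ ∀ i, s(a,b) ≠ s(v, u i) := by
  simp only [Ygraph, fromRel_adj]
  constructor
  · rintro ⟨h1, h2 | h2⟩
    · exact ⟨by simpa using h1, h2⟩
    · exact ⟨by simpa using h1, fun i hi => h2 i (by rwa [Sym2.eq_swap] at hi)⟩
  · rintro ⟨h1, h2⟩
    exact ⟨by simpa using h1, Or.inl h2⟩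

lemma Yadj_inl_inr {k : ℕ} {v : Fin (k+1)} {u : Fin 3 → Fin (k+1)} {a b : Fin (k+1)} {i : Fin 3} :
    (Ygraph k v u).Adj (Sum.inl a) (Sum.inr (i, b)) ↔ (a = u i ∧ b = 0) ∨ (a = v ∧ b = 1) := by
  simp only [Ygraph, fromRel_adj]
  constructor
  · rintro ⟨-, h | h⟩
    · exact h
    · exact h.elim
  · rintro h
    exact ⟨by simp, Or.inl h⟩

lemma Yadj_inr_inr {k : ℕ} {v : Fin (k+1)} {u : Fin 3 → Fin (k+1)} {a b : Fin (k+1)} {i j : Fin 3} :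
    (Ygraph k v u).Adj (Sum.inr (i, a)) (Sum.inr (j, b)) ↔
      (i, a) ≠ (j, b) ∧ i = j ∧ s(a,b) ≠ s((0 : Fin (k+1)), 1) := by
  simp only [Ygraph, fromRel_adj]
  constructor
  · rintro ⟨h1, ⟨h2, h3⟩ | ⟨h2, h3⟩⟩
    · exact ⟨by simpa using h1, h2, h3⟩
    · exact ⟨by simpa using h1, h2.symm, fun hh => h3 (by rwa [Sym2.eq_swap] at hh)⟩
  · rintro ⟨h1, h2, h3⟩
    exact ⟨by simpa using h1, Or.inl ⟨h2, h3⟩⟩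

lemma ncard_inl_union_inr {α β : Type*} [Fintype α] [Fintype β] (s : Set α) (t : Set β) :
    ((Sum.inl '' s) ∪ (Sum.inr '' t) : Set (α ⊕ β)).ncard = s.ncard + t.ncard := by
  rw [Set.ncard_union_eq (by
      rw [Set.disjoint_left]; rintro x ⟨a, -, rfl⟩ ⟨b, -, h⟩; simp at h),
    Set.ncard_image_of_injective _ Sum.inl_injective,
    Set.ncard_image_of_injective _ Sum.inr_injective]

lemma ncard_compl_fin {n : ℕ} (s : Set (Fin n)) : sᶜ.ncard = n - s.ncard := by
  have := Set.ncard_add_ncard_compl s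
  simp only [Nat.card_eq_fintype_card, Fintype.card_fin] at this
  omega
theorem Yreg (k : ℕ) (hk : 4 ≤ k) (v : Fin (k + 1)) (u : Fin 3 → Fin (k + 1))
    (hinj : Function.Injective u) (hvu : ∀ i, v ≠ u i) :
    RegularDeg (Ygraph k v u) k := by
  classical
  have h01 : (0 : Fin (k+1)) ≠ 1 := by
    intro h
    have := congrArg Fin.val h
    rw [Fin.val_zero, Fin.val_one'] at this
    rw [Nat.mod_eq_of_lt (by omega)] at this
    omega
  have hprodinj : ∀ i : Fin 3, Function.Injective (fun b : Fin (k+1) => (i, b)) := by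
    intro i x y h
    exact ((Prod.mk.injEq _ _ _ _).mp h).2
  intro w
  rw [Nat.card_coe_set_eq]
  cases w with
  | inl a =>
    by_cases hav : a = v
    · subst hav
      have hset : (Ygraph k a u).neighborSet (Sum.inl a)
          = Sum.inl '' ({a, u 0, u 1, u 2} : Set (Fin (k+1)))ᶜ
            ∪ Sum.inr '' ((fun i : Fin 3 => (i, (1 : Fin (k+1)))) '' Set.univ) := by
        ext x
        cases x with
        | inl b =>
          rw [mem_neighborSet, Yadj_inl_inl]
          constructor
          · rintro ⟨h1, h2⟩
            refine Or.inl ⟨b, ?_, rfl⟩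
            intro hb
            rcases hb with hb | hb | hb | hb
            · exact h1 hb.symm
            · exact h2 0 (by rw [hb])
            · exact h2 1 (by rw [hb])
            · exact h2 2 (by rw [hb])
          · rintro (⟨b', hb', heq⟩ | ⟨p, -, heq⟩)
            · obtain rfl := Sum.inl_injective heq
              refine ⟨fun h => hb' (by exact Or.inl h.symm), fun i hi => ?_⟩
              rcases Sym2.eq_iff.mp hi with ⟨-, hb⟩ | ⟨ha, -⟩
              · refine hb' ?_
                subst hb
                fin_cases i
                · exact Or.inr (Or.inl rfl)
                · exact Or.inr (Or.inr (Or.inl rfl))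
                · exact Or.inr (Or.inr (Or.inr rfl))
              · exact hvu i ha
            · exact absurd heq (by simp)
        | inr p =>
          obtain ⟨i, b⟩ := p
          rw [mem_neighborSet, Yadj_inl_inr]
          constructor
          · rintro (⟨ha, -⟩ | ⟨-, rfl⟩)
            · exact absurd ha (hvu i)
            · exact Or.inr ⟨(i, 1), ⟨i, Set.mem_univ i, rfl⟩, rfl⟩
          · rintro (⟨b', -, heq⟩ | ⟨p, ⟨j, -, rfl⟩, heq⟩)
            · exact absurd heq (by simp)
            · obtain heq := Sum.inr_injective heq
              rw [Prod.mk.injEq] at heq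
              obtain ⟨rfl, rfl⟩ := heq
              exact Or.inr ⟨rfl, rfl⟩
      rw [hset, ncard_inl_union_inr, ncard_compl_fin,
        Set.ncard_image_of_injective _ (fun x y h => ((Prod.mk.injEq _ _ _ _).mp h).1)]
      have h4 : ({a, u 0, u 1, u 2} : Set (Fin (k+1))).ncard = 4 := by
        have h01' : u 0 ≠ u 1 := fun h => absurd (hinj h) (by decide)
        have h02 : u 0 ≠ u 2 := fun h => absurd (hinj h) (by decide)
        have h12 : u 1 ≠ u 2 := fun h => absurd (hinj h) (by decide)
        rw [Set.ncard_insert_of_notMem (by simp [hvu 0, hvu 1, hvu 2]),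
          Set.ncard_insert_of_notMem (by simp [h01', h02]),
          Set.ncard_insert_of_notMem (by simp [h12]), Set.ncard_singleton]
      rw [h4, Set.ncard_univ]
      simp only [Nat.card_eq_fintype_card, Fintype.card_fin]
      omega
    · by_cases hau : ∃ j, a = u j
      · obtain ⟨j, rfl⟩ := hau
        have hset : (Ygraph k v u).neighborSet (Sum.inl (u j))
            = Sum.inl '' ({u j, v} : Set (Fin (k+1)))ᶜ
              ∪ Sum.inr '' ({((j, (0 : Fin (k+1))))} : Set (Fin 3 × Fin (k+1))) := by
          ext x
          cases x with
          | inl b =>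
            rw [mem_neighborSet, Yadj_inl_inl]
            constructor
            · rintro ⟨h1, h2⟩
              refine Or.inl ⟨b, ?_, rfl⟩
              rintro (hb | hb)
              · exact h1 hb.symm
              · exact h2 j (by rw [hb, Sym2.eq_swap])
            · rintro (⟨b', hb', heq⟩ | ⟨p, -, heq⟩)
              · obtain rfl := Sum.inl_injective heq
                refine ⟨fun h => hb' (Or.inl h.symm), fun i hi => ?_⟩
                rcases Sym2.eq_iff.mp hi with ⟨ha, -⟩ | ⟨ha, hb⟩
                · exact hvu j ha.symm
                · exact hb' (Or.inr hb)
              · exact absurd heq (by simp)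
          | inr p =>
            obtain ⟨i, b⟩ := p
            rw [mem_neighborSet, Yadj_inl_inr]
            constructor
            · rintro (⟨ha, rfl⟩ | ⟨ha, -⟩)
              · obtain rfl := hinj ha
                exact Or.inr ⟨(j, 0), rfl, rfl⟩
              · exact absurd ha.symm (hvu j)
            · rintro (⟨b', -, heq⟩ | ⟨p, hp, heq⟩)
              · exact absurd heq (by simp)
              · rw [Set.mem_singleton_iff] at hp
                subst hp
                obtain heq := Sum.inr_injective heq
                rw [Prod.mk.injEq] at heq
                obtain ⟨rfl, rfl⟩ := heq
                exact Or.inl ⟨rfl, rfl⟩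
        rw [hset, ncard_inl_union_inr, ncard_compl_fin, Set.ncard_singleton]
        have h2 : ({u j, v} : Set (Fin (k+1))).ncard = 2 := by
          rw [Set.ncard_insert_of_notMem (by simp [Ne.symm (hvu j)]),
            Set.ncard_singleton]
        rw [h2]
        omega
      · push_neg at hau
        have hset : (Ygraph k v u).neighborSet (Sum.inl a)
            = Sum.inl '' ({a} : Set (Fin (k+1)))ᶜ := by
          ext x
          cases x with
          | inl b =>
            rw [mem_neighborSet, Yadj_inl_inl]
            constructor
            · rintro ⟨h1, -⟩
              exact ⟨b, fun hb => h1 hb.symm, rfl⟩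
            · rintro ⟨b', hb', heq⟩
              obtain rfl := Sum.inl_injective heq
              refine ⟨fun h => hb' h.symm, fun i hi => ?_⟩
              rcases Sym2.eq_iff.mp hi with ⟨ha, -⟩ | ⟨ha, -⟩
              · exact hav ha
              · exact hau i ha
          | inr p =>
            obtain ⟨i, b⟩ := p
            rw [mem_neighborSet, Yadj_inl_inr]
            constructor
            · rintro (⟨ha, -⟩ | ⟨ha, -⟩)
              · exact absurd ha (hau i)
              · exact absurd ha hav
            · rintro ⟨b', -, heq⟩
              exact absurd heq (by simp)
        rw [hset, Set.ncard_image_of_injective _ Sum.inl_injective, ncard_compl_fin,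
          Set.ncard_singleton]
        omega
  | inr p =>
    obtain ⟨i, a⟩ := p
    have h2card : ({0, 1} : Set (Fin (k+1))).ncard = 2 := by
      rw [Set.ncard_insert_of_notMem (by simp [h01]), Set.ncard_singleton]
    by_cases ha0 : a = 0
    · subst ha0
      have hset : (Ygraph k v u).neighborSet (Sum.inr (i, 0))
          = Sum.inl '' ({u i} : Set (Fin (k+1)))
            ∪ Sum.inr '' ((fun b => (i, b)) '' ({0, 1} : Set (Fin (k+1)))ᶜ) := by
        ext x
        cases x with
        | inl b =>
          rw [mem_neighborSet, adj_comm, Yadj_inl_inr]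
          constructor
          · rintro (⟨rfl, -⟩ | ⟨rfl, hh⟩)
            · exact Or.inl ⟨u i, rfl, rfl⟩
            · exact absurd hh h01
          · rintro (⟨b', rfl, heq⟩ | ⟨p, -, heq⟩)
            · obtain rfl := Sum.inl_injective heq
              exact Or.inl ⟨rfl, rfl⟩
            · exact absurd heq (by simp)
        | inr p =>
          obtain ⟨j, b⟩ := p
          rw [mem_neighborSet, Yadj_inr_inr]
          constructor
          · rintro ⟨h1, rfl, h3⟩
            refine Or.inr ⟨(i, b), ⟨b, ?_, rfl⟩, rfl⟩
            rintro (hb | hb)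
            · exact h1 (by rw [hb])
            · exact h3 (by rw [hb])
          · rintro (⟨b', -, heq⟩ | ⟨p, ⟨b', hb', rfl⟩, heq⟩)
            · exact absurd heq (by simp)
            · obtain heq := Sum.inr_injective heq
              rw [Prod.mk.injEq] at heq
              obtain ⟨rfl, rfl⟩ := heq
              refine ⟨fun h => hb' ?_, rfl, fun h => ?_⟩
              · rw [Prod.mk.injEq] at h
                exact Or.inl h.2.symm
              · rcases Sym2.eq_iff.mp h with ⟨-, hb⟩ | ⟨hh, -⟩
                · exact hb' (Or.inr hb)
                · exact h01 hh
      rw [hset, ncard_inl_union_inr, Set.ncard_singleton,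
        Set.ncard_image_of_injective _ (hprodinj i), ncard_compl_fin, h2card]
      omega
    · by_cases ha1 : a = 1
      · subst ha1
        have hset : (Ygraph k v u).neighborSet (Sum.inr (i, 1))
            = Sum.inl '' ({v} : Set (Fin (k+1)))
              ∪ Sum.inr '' ((fun b => (i, b)) '' ({0, 1} : Set (Fin (k+1)))ᶜ) := by
          ext x
          cases x with
          | inl b =>
            rw [mem_neighborSet, adj_comm, Yadj_inl_inr]
            constructor
            · rintro (⟨rfl, hh⟩ | ⟨rfl, -⟩)
              · exact absurd hh.symm h01
              · exact Or.inl ⟨b, rfl, rfl⟩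
            · rintro (⟨b', rfl, heq⟩ | ⟨p, -, heq⟩)
              · obtain rfl := Sum.inl_injective heq
                exact Or.inr ⟨rfl, rfl⟩
              · exact absurd heq (by simp)
          | inr p =>
            obtain ⟨j, b⟩ := p
            rw [mem_neighborSet, Yadj_inr_inr]
            constructor
            · rintro ⟨h1, rfl, h3⟩
              refine Or.inr ⟨(i, b), ⟨b, ?_, rfl⟩, rfl⟩
              rintro (hb | hb)
              · exact h3 (by rw [hb, Sym2.eq_swap])
              · exact h1 (by rw [hb])
            · rintro (⟨b', -, heq⟩ | ⟨p, ⟨b', hb', rfl⟩, heq⟩)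
              · exact absurd heq (by simp)
              · obtain heq := Sum.inr_injective heq
                rw [Prod.mk.injEq] at heq
                obtain ⟨rfl, rfl⟩ := heq
                refine ⟨fun h => hb' ?_, rfl, fun h => ?_⟩
                · rw [Prod.mk.injEq] at h
                  exact Or.inr h.2.symm
                · rcases Sym2.eq_iff.mp h with ⟨hh, -⟩ | ⟨-, hb⟩
                  · exact h01 hh.symm
                  · exact hb' (Or.inl hb)
        rw [hset, ncard_inl_union_inr, Set.ncard_singleton,
          Set.ncard_image_of_injective _ (hprodinj i), ncard_compl_fin, h2card]
        omega
      · have hset : (Ygraph k v u).neighborSet (Sum.inr (i, a))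
            = Sum.inr '' ((fun b => (i, b)) '' ({a} : Set (Fin (k+1)))ᶜ) := by
          ext x
          cases x with
          | inl b =>
            rw [mem_neighborSet, adj_comm, Yadj_inl_inr]
            constructor
            · rintro (⟨-, ha⟩ | ⟨-, ha⟩)
              · exact absurd ha ha0
              · exact absurd ha ha1
            · rintro ⟨p, -, heq⟩
              exact absurd heq (by simp)
          | inr p =>
            obtain ⟨j, b⟩ := p
            rw [mem_neighborSet, Yadj_inr_inr]
            constructor
            · rintro ⟨h1, rfl, -⟩
              refine ⟨(i, b), ⟨b, fun hb => h1 (by rw [hb]), rfl⟩, rfl⟩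
            · rintro ⟨p, ⟨b', hb', rfl⟩, heq⟩
              obtain heq := Sum.inr_injective heq
              rw [Prod.mk.injEq] at heq
              obtain ⟨rfl, rfl⟩ := heq
              refine ⟨fun h => hb' ?_, rfl, fun h => ?_⟩
              · rw [Prod.mk.injEq] at h
                exact h.2.symm
              · rcases Sym2.eq_iff.mp h with ⟨ha, -⟩ | ⟨ha, -⟩
                · exact ha0 ha
                · exact ha1 ha
        rw [hset, Set.ncard_image_of_injective _ Sum.inr_injective,
          Set.ncard_image_of_injective _ (hprodinj i), ncard_compl_fin, Set.ncard_singleton]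
        omega
open SimpleGraph.Walk

variable {W : Type*} {G : SimpleGraph W}

open SimpleGraph.Walk in
lemma mem_support_of_mem_edge {a b : W} {p : G.Walk a b} {x : W} {e : Sym2 W}
    (he : e ∈ p.edges) (hx : x ∈ e) : x ∈ p.support := by
  induction e with
  | _ y z =>
    rcases Sym2.mem_iff.mp hx with rfl | rfl
    · exact p.fst_mem_support_of_mem_edges he
    · exact p.snd_mem_support_of_mem_edges he

lemma edges_at_start_eq {a b : W} {p : G.Walk a b} (h : a ∉ p.support.tail)
    {e₁ e₂ : Sym2 W} (h1 : e₁ ∈ p.edges) (h2 : e₂ ∈ p.edges)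
    (m1 : a ∈ e₁) (m2 : a ∈ e₂) : e₁ = e₂ := by
  cases p with
  | nil => simp at h1
  | cons hadj q =>
    rw [support_cons, List.tail_cons] at h
    rw [edges_cons, List.mem_cons] at h1 h2
    rcases h1 with rfl | h1
    · rcases h2 with h2 | h2
      · exact h2.symm
      · exact absurd (mem_support_of_mem_edge h2 m2) h
    · exact absurd (mem_support_of_mem_edge h1 m1) h

lemma edges_at_end_eq {a b : W} {p : G.Walk a b} (h : p.support.Nodup)
    {e₁ e₂ : Sym2 W} (h1 : e₁ ∈ p.edges) (h2 : e₂ ∈ p.edges)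
    (m1 : b ∈ e₁) (m2 : b ∈ e₂) : e₁ = e₂ := by
  have hrev : p.reverse.support.Nodup := by rwa [support_reverse, List.nodup_reverse]
  have hb : b ∉ p.reverse.support.tail := by
    rw [support_eq_cons p.reverse] at hrev
    exact (List.nodup_cons.mp hrev).1
  exact edges_at_start_eq hb (by rwa [edges_reverse, List.mem_reverse])
    (by rwa [edges_reverse, List.mem_reverse]) m1 m2

lemma exists_crossing_edge (S : Set W) {a b : W} (p : G.Walk a b) :
    a ∈ S → b ∉ S →
      ∃ x y, x ∈ S ∧ y ∉ S ∧ G.Adj x y ∧ s(x, y) ∈ p.edges := by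
  induction p with
  | nil => intro ha hb; exact absurd ha hb
  | @cons a c b hadj q ih =>
    intro ha hb
    by_cases hc : c ∈ S
    · obtain ⟨x, y, hx, hy, hxy, he⟩ := ih hc hb
      exact ⟨x, y, hx, hy, hxy, by simp [he]⟩
    · exact ⟨a, c, ha, hc, hadj, by simp⟩

lemma mem_tail_support_of_closed {w : W} {c : G.Walk w w} (h : ¬c.Nil) {x : W}
    (hx : x ∈ c.support) : x ∈ c.support.tail := by
  cases c with
  | nil => simp at h
  | cons hadj q =>
    rw [support_cons, List.tail_cons]
    rw [support_cons, List.mem_cons] at hx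
    rcases hx with rfl | hx
    · exact q.end_mem_support
    · exact hx

lemma no_three_edges_at_endpoint {w : W} {c : G.Walk w w} (hc : c.IsCycle)
    (e : Fin 3 → Sym2 W) (hmem : ∀ i, e i ∈ c.edges) (hin : ∀ i, w ∈ e i)
    (hne : ∀ i j, e i = e j → i = j) : False := by
  cases c with
  | nil => exact hc.ne_nil rfl
  | @cons _ x _ hadj q =>
    have hnd : q.support.Nodup := by
      have := hc.support_nodup
      rwa [support_cons, List.tail_cons] at this
    have key : ∀ i, e i = s(w, x) ∨ e i ∈ q.edges := fun i => by
      have := hmem i; rwa [edges_cons, List.mem_cons] at this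
    have hq : ∀ i j, i ≠ j → e i ∈ q.edges → e j ∈ q.edges → False := fun i j hij hi hj =>
      hij (hne i j (edges_at_end_eq hnd hi hj (hin i) (hin j)))
    have hh : ∀ i j, i ≠ j → e i = s(w, x) → e j = s(w, x) → False := fun i j hij hi hj =>
      hij (hne i j (hi.trans hj.symm))
    rcases key 0 with h0 | h0 <;> rcases key 1 with h1 | h1 <;> rcases key 2 with h2 | h2
    · exact hh 0 1 (by decide) h0 h1
    · exact hh 0 1 (by decide) h0 h1
    · exact hh 0 2 (by decide) h0 h2
    · exact hq 1 2 (by decide) h1 h2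
    · exact hh 1 2 (by decide) h1 h2
    · exact hq 0 2 (by decide) h0 h2
    · exact hq 0 1 (by decide) h0 h1
    · exact hq 0 1 (by decide) h0 h1

theorem Ynonham (k : ℕ) (hk : 4 ≤ k) (v : Fin (k + 1)) (u : Fin 3 → Fin (k + 1))
    (hinj : Function.Injective u) (hvu : ∀ i, v ≠ u i)
    (w : Fin (k + 1) ⊕ Fin 3 × Fin (k + 1)) (c : (Ygraph k v u).Walk w w) :
    ¬ c.IsHamiltonianCycle := by
  classical
  intro hc
  set VT := Fin (k + 1) ⊕ Fin 3 × Fin (k + 1)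
  set e : Fin 3 → Sym2 VT := fun i => s(Sum.inl v, Sum.inr (i, 1)) with he
  have hedist : ∀ i j : Fin 3, e i = e j → i = j := by
    intro i j h
    simp only [he] at h
    rcases Sym2.eq_iff.mp h with ⟨-, h2⟩ | ⟨h1, -⟩
    · exact (((Prod.mk.injEq _ _ _ _).mp (Sum.inr_injective h2)).1)
    · exact absurd h1 (by simp)
  have hmem : ∀ i, e i ∈ c.edges := by
    intro i
    by_contra hni
    set S : Set VT := {x | ∃ b, x = Sum.inr (i, b)} with hS
    have ha₀ : (Sum.inr (i, 0) : VT) ∈ c.support := hc.mem_support _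
    set c₁ := c.rotate _ ha₀ with hc₁def
    have hc₁ : c₁.IsCycle := hc.isCycle.rotate ha₀
    have hni₁ : e i ∉ c₁.edges := fun h => hni ((Walk.rotate_edges c _ ha₀).mem_iff.mp h)
    have hv₁ : (Sum.inl v : VT) ∈ c₁.support := by
      have h1 : (Sum.inl v : VT) ∈ c.support.tail :=
        mem_tail_support_of_closed hc.isCycle.not_nil (hc.mem_support _)
      exact List.mem_of_mem_tail ((Walk.support_rotate c _ ha₀).mem_iff.mpr h1)
    have hclass : ∀ x y : VT, x ∈ S → y ∉ S → (Ygraph k v u).Adj x y →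
        s(x, y) = s(Sum.inl (u i), Sum.inr (i, 0)) ∨ s(x, y) = e i := by
      rintro x y ⟨b, rfl⟩ hy hadj
      cases y with
      | inl a =>
        rw [adj_comm, Yadj_inl_inr] at hadj
        rcases hadj with ⟨rfl, rfl⟩ | ⟨rfl, rfl⟩
        · exact Or.inl (Sym2.eq_swap)
        · exact Or.inr (Sym2.eq_swap)
      | inr p =>
        obtain ⟨j, b'⟩ := p
        rw [Yadj_inr_inr] at hadj
        obtain ⟨-, rfl, -⟩ := hadj
        exact absurd ⟨b', rfl⟩ hy
    have hvnS : (Sum.inl v : VT) ∉ S := by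
      rintro ⟨b, hb⟩
      exact absurd hb (by simp)
    have hinS : (Sum.inr (i, (0 : Fin (k+1))) : VT) ∈ S := ⟨0, rfl⟩
    obtain ⟨x₁, y₁, hx₁, hy₁, hadj₁, hm₁⟩ :=
      exists_crossing_edge S (c₁.takeUntil _ hv₁) hinS hvnS
    obtain ⟨x₂, y₂, hx₂, hy₂, hadj₂, hm₂'⟩ :=
      exists_crossing_edge S (c₁.dropUntil _ hv₁).reverse hinS hvnS
    have hm₂ : s(x₂, y₂) ∈ (c₁.dropUntil _ hv₁).edges := by
      rwa [Walk.edges_reverse, List.mem_reverse] at hm₂'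
    have h₁ : s(x₁, y₁) = s(Sum.inl (u i), Sum.inr (i, 0)) := by
      rcases hclass _ _ hx₁ hy₁ hadj₁ with h | h
      · exact h
      · exact absurd (h ▸ (Walk.edges_takeUntil_subset c₁ hv₁ hm₁)) hni₁
    have h₂ : s(x₂, y₂) = s(Sum.inl (u i), Sum.inr (i, 0)) := by
      rcases hclass _ _ hx₂ hy₂ hadj₂ with h | h
      · exact h
      · exact absurd (h ▸ (Walk.edges_dropUntil_subset c₁ hv₁ hm₂)) hni₁
    have hnd : ((c₁.takeUntil _ hv₁).edges ++ (c₁.dropUntil _ hv₁).edges).Nodup := by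
      rw [← Walk.edges_append, Walk.take_spec]
      exact hc₁.isCircuit.isTrail.edges_nodup
    exact (List.disjoint_of_nodup_append hnd) (h₁ ▸ hm₁) (h₂ ▸ hm₂)
  have hv : (Sum.inl v : VT) ∈ c.support := hc.mem_support _
  have hc₂ : (c.rotate _ hv).IsCycle := hc.isCycle.rotate hv
  refine no_three_edges_at_endpoint hc₂ e (fun i => ?_) (fun i => ?_) hedist
  · exact (Walk.rotate_edges c _ hv).mem_iff.mpr (hmem i)
  · simp [he]

end AuxProof

/-- For `k ≥ 4`, the graph `Y` obtained from `K_{k+1}` (with distinguished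
distinct vertices `v, u₁, u₂, u₃`) by inserting a copy of `K_{k+1}` minus an edge into each of
the edges `u_i v` is a simple `k`-regular graph with no Hamilton cycle. -/
theorem Ygraph_regular_non_hamiltonian (k : ℕ) (hk : 4 ≤ k) (v : Fin (k + 1))
    (u : Fin 3 → Fin (k + 1)) (hinj : Function.Injective u) (hvu : ∀ i, v ≠ u i) :
    RegularDeg (Ygraph k v u) k ∧
      ∀ (w : Fin (k + 1) ⊕ Fin 3 × Fin (k + 1)) (c : (Ygraph k v u).Walk w w),
        ¬ c.IsHamiltonianCycle :=
  ⟨Yreg k hk v u hinj hvu, fun w c => Ynonham k hk v u hinj hvu w c⟩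
end

section
/- A Hamilton decomposition of L(X) that is everywhere Euler tour compatible is equivalent to a perfect set of Euler tours of X: given such a decomposition one obtains a set S of Euler tours of X in which every 2-path of X occurs in exactly one tour of S, and conversely. -/
open SimpleGraph
open scoped Classical

universe u v'

variable {V : Type*}

/-- The 2-path `{f, g}` (a pair of adjacent edges of `X`) occurs in the closed walk `p` if
`f` and `g` are cyclically consecutive in the edge sequence of `p`. -/
def TwoPathIn {W : Type*} {X : SimpleGraph W} {x : W} (p : X.Walk x x)
    (f g : Sym2 W) : Prop :=
  ∃ l : List (Sym2 W), (f :: g :: l) ~r p.edges ∨ (g :: f :: l) ~r p.edges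

namespace EKAux

open List

variable {α : Type*}

/-- The list of unordered pairs of consecutive vertices along the path `a :: l`. -/
def pairList (a : α) : List α → List (Sym2 α)
  | [] => []
  | b :: l => s(a, b) :: pairList b l

@[simp] lemma pairList_nil (a : α) : pairList a [] = [] := rfl

@[simp] lemma pairList_cons (a b : α) (l : List α) :
    pairList a (b :: l) = s(a, b) :: pairList b l := rfl

@[simp] lemma pairList_length (a : α) (l : List α) : (pairList a l).length = l.length := by
  induction l generalizing a with
  | nil => rfl
  | cons b l ih => simp [ih]

lemma pairList_append (a : α) (l m : List α) :
    pairList a (l ++ m) = pairList a l ++ pairList (l.getLastD a) m := by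
  induction l generalizing a with
  | nil => simp
  | cons b l ih =>
    rw [List.cons_append, pairList_cons, pairList_cons, ih b, List.getLastD_cons,
      List.cons_append]

lemma mem_pairList_iff {a : α} {l : List α} {x y : α} :
    s(x, y) ∈ pairList a l ↔ ([x, y] <:+: a :: l ∨ [y, x] <:+: a :: l) := by
  induction l generalizing a with
  | nil =>
    simp only [pairList_nil, List.not_mem_nil, false_iff]
    rintro (h | h) <;> exact absurd h.length_le (by simp)
  | cons b l ih =>
    rw [pairList_cons, List.mem_cons, ih, List.infix_cons_iff (a := a),
      List.infix_cons_iff (a := a)]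
    constructor
    · rintro (h | h | h)
      · rcases Sym2.eq_iff.mp h with ⟨rfl, rfl⟩ | ⟨rfl, rfl⟩
        · exact Or.inl (Or.inl ((List.cons_prefix_cons).mpr ⟨rfl,
            (List.cons_prefix_cons).mpr ⟨rfl, List.nil_prefix⟩⟩))
        · exact Or.inr (Or.inl ((List.cons_prefix_cons).mpr ⟨rfl,
            (List.cons_prefix_cons).mpr ⟨rfl, List.nil_prefix⟩⟩))
      · exact Or.inl (Or.inr h)
      · exact Or.inr (Or.inr h)
    · rintro ((h | h) | (h | h))
      · obtain ⟨rfl, h2⟩ := List.cons_prefix_cons.mp h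
        obtain ⟨rfl, -⟩ := List.cons_prefix_cons.mp h2
        exact Or.inl rfl
      · exact Or.inr (Or.inl h)
      · obtain ⟨rfl, h2⟩ := List.cons_prefix_cons.mp h
        obtain ⟨rfl, -⟩ := List.cons_prefix_cons.mp h2
        exact Or.inl Sym2.eq_swap
      · exact Or.inr (Or.inr h)

/-- Cyclic adjacency of two elements in a list regarded as a cyclic sequence. -/
def CycAdj (l : List α) (x y : α) : Prop :=
  ∃ t, (x :: y :: t) ~r l ∨ (y :: x :: t) ~r l

lemma CycAdj.of_rotated {l l' : List α} (h : l ~r l') {x y : α} :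
    CycAdj l x y → CycAdj l' x y := by
  rintro ⟨t, ht | ht⟩
  · exact ⟨t, Or.inl (ht.trans h)⟩
  · exact ⟨t, Or.inr (ht.trans h)⟩

lemma cycAdj_congr {l l' : List α} (h : l ~r l') {x y : α} :
    CycAdj l x y ↔ CycAdj l' x y :=
  ⟨CycAdj.of_rotated h, CycAdj.of_rotated h.symm⟩

lemma exists_of_map_isRotated {β : Type*} {f : α → β} (hf : Function.Injective f)
    {l : List α} {a b : β} {t : List β} (h : (a :: b :: t) ~r l.map f) :
    ∃ x y t', a = f x ∧ b = f y ∧ (x :: y :: t') ~r l := by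
  obtain ⟨n, hn⟩ := h.symm
  rw [← List.map_rotate] at hn
  rcases hrr : l.rotate n with - | ⟨x', l'⟩
  · rw [hrr] at hn; simp at hn
  rcases hl' : l' with - | ⟨y', t''⟩
  · rw [hrr, hl'] at hn; simp at hn
  rw [hrr, hl'] at hn
  simp only [List.map_cons, List.cons.injEq] at hn
  exact ⟨x', y', t'', hn.1.symm, hn.2.1.symm, List.IsRotated.symm ⟨n, hrr.trans (by rw [hl'])⟩⟩

lemma cycAdj_map {β : Type*} {f : α → β} (hf : Function.Injective f) {l : List α} {x y : α} :
    CycAdj (l.map f) (f x) (f y) ↔ CycAdj l x y := by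
  constructor
  · rintro ⟨t, ht | ht⟩
    · obtain ⟨x', y', t', hx, hy, hrot⟩ := exists_of_map_isRotated hf ht
      exact ⟨t', Or.inl (by rwa [hf hx.symm, hf hy.symm] at hrot)⟩
    · obtain ⟨x', y', t', hy, hx, hrot⟩ := exists_of_map_isRotated hf ht
      exact ⟨t', Or.inr (by rwa [hf hy.symm, hf hx.symm] at hrot)⟩
  · rintro ⟨t, ht | ht⟩
    · exact ⟨t.map f, Or.inl (by simpa using ht.map f)⟩
    · exact ⟨t.map f, Or.inr (by simpa using ht.map f)⟩

/-- From a prefix of a rotation to an infix of the list extended cyclically. -/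
lemma infix_of_prefix_rotate {w v : List α} {n : ℕ} (hn : n < v.length)
    (h : w <+: v.rotate n) : w <:+: v ++ v.take (w.length - 1) := by
  have hk : 0 < v.length := lt_of_le_of_lt (Nat.zero_le n) hn
  have hwlen : w.length ≤ v.length := le_trans h.length_le (by simp)
  -- w <+: drop n (v ++ v)
  have h1 : v.rotate n <+: v.drop n ++ v := by
    rw [List.rotate_eq_drop_append_take (le_of_lt hn)]
    exact (List.prefix_append_right_inj _).mpr (List.take_prefix _ _)
  have h2 : v.drop n ++ v = (v ++ v).drop n := by
    rw [List.drop_append, Nat.sub_eq_zero_of_le (le_of_lt hn), List.drop_zero]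
  have h3 : w <+: (v ++ v).drop n := h2 ▸ (h.trans h1)
  -- decompose take (v.length + (w.length - 1)) of (v ++ v)
  have hKn : w.length ≤ v.length + (w.length - 1) - n := by omega
  have h4 : w <+: ((v ++ v).drop n).take (v.length + (w.length - 1) - n) :=
    List.prefix_take_iff.mpr ⟨h3, hKn⟩
  have h5 : w <:+: (v ++ v).take (v.length + (w.length - 1)) := by
    have : v.length + (w.length - 1) = n + (v.length + (w.length - 1) - n) := by omega
    rw [this, List.take_add]
    obtain ⟨t, ht⟩ := h4
    exact ⟨(v ++ v).take n, t, by rw [List.append_assoc, ht]⟩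
  rwa [List.take_add, List.take_left, List.drop_left] at h5

/-- From an infix of the cyclically extended list to a prefix of a rotation. -/
lemma prefix_rotate_of_infix {w v : List α} (hw : w ≠ [])
    (hlen : w.length ≤ v.length) (h : w <:+: v ++ v.take (w.length - 1)) :
    ∃ n, n < v.length ∧ w <+: v.rotate n := by
  have hwpos : 0 < w.length := List.length_pos_iff.mpr hw
  obtain ⟨s, t, hst⟩ := h
  have hkpos : 0 < v.length := lt_of_lt_of_le hwpos hlen
  have hlens : s.length + w.length + t.length = v.length + (w.length - 1) := by
    have := congrArg List.length hst
    simp only [List.length_append, List.length_take] at this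
    omega
  have hs : s.length < v.length := by omega
  refine ⟨s.length, hs, ?_⟩
  -- w <+: drop s.length (v ++ v)
  have h3 : w <+: (v ++ v).drop s.length := by
    have hfull : v ++ v.take (w.length - 1) <+: v ++ v :=
      (List.prefix_append_right_inj _).mpr (List.take_prefix _ _)
    have : (v ++ v.take (w.length - 1)).drop s.length <+: (v ++ v).drop s.length :=
      hfull.drop _
    refine List.IsPrefix.trans ?_ this
    rw [← hst, List.append_assoc, List.drop_left]
    exact ⟨t, rfl⟩
  have h2 : (v ++ v).drop s.length = v.drop s.length ++ v := by
    rw [List.drop_append, Nat.sub_eq_zero_of_le (le_of_lt hs), List.drop_zero]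
  have h1 : v.rotate s.length <+: v.drop s.length ++ v := by
    rw [List.rotate_eq_drop_append_take (le_of_lt hs)]
    exact (List.prefix_append_right_inj _).mpr (List.take_prefix _ _)
  exact List.prefix_of_prefix_length_le (h2 ▸ h3) h1 (by simp [hlen])

lemma cycAdj_iff_exists_prefix_rotate {l : List α} {x y : α} :
    CycAdj l x y ↔ (∃ n, [x, y] <+: l.rotate n) ∨ (∃ n, [y, x] <+: l.rotate n) := by
  constructor
  · rintro ⟨t, ht | ht⟩
    · obtain ⟨n, hn⟩ := ht.symm
      exact Or.inl ⟨n, ⟨t, by simp [hn]⟩⟩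
    · obtain ⟨n, hn⟩ := ht.symm
      exact Or.inr ⟨n, ⟨t, by simp [hn]⟩⟩
  · rintro (⟨n, ⟨t, hn⟩⟩ | ⟨n, ⟨t, hn⟩⟩)
    · exact ⟨t, Or.inl (List.IsRotated.symm ⟨n, hn.symm⟩)⟩
    · exact ⟨t, Or.inr (List.IsRotated.symm ⟨n, hn.symm⟩)⟩

lemma cycAdj_iff_infix {v : List α} (hv : 2 ≤ v.length) {x y : α} :
    CycAdj v x y ↔ ([x, y] <:+: v ++ v.take 1 ∨ [y, x] <:+: v ++ v.take 1) := by
  have hvne : v ≠ [] := by rintro rfl; simp at hv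
  rw [cycAdj_iff_exists_prefix_rotate]
  constructor
  · rintro (⟨n, hn⟩ | ⟨n, hn⟩)
    · left
      have := infix_of_prefix_rotate (w := [x, y]) (v := v) (n := n % v.length)
        (Nat.mod_lt _ (by omega)) (by rwa [List.rotate_mod])
      simpa using this
    · right
      have := infix_of_prefix_rotate (w := [y, x]) (v := v) (n := n % v.length)
        (Nat.mod_lt _ (by omega)) (by rwa [List.rotate_mod])
      simpa using this
  · rintro (h | h)
    · obtain ⟨n, -, hn⟩ := prefix_rotate_of_infix (w := [x, y]) (v := v) (by simp)
        (by simpa using hv) (by simpa using h)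
      exact Or.inl ⟨n, hn⟩
    · obtain ⟨n, -, hn⟩ := prefix_rotate_of_infix (w := [y, x]) (v := v) (by simp)
        (by simpa using hv) (by simpa using h)
      exact Or.inr ⟨n, hn⟩

lemma rotate_concat (m : List α) (g : α) : (m ++ [g]).rotate m.length = g :: m := by
  rw [List.rotate_eq_drop_append_take (by simp), List.drop_left, List.take_left]
  rfl

lemma mem_of_getLast?_eq {l : List α} {c : α} (h : l.getLast? = some c) : c ∈ l := by
  have hne : l ≠ [] := by rintro rfl; simp at h
  rw [List.getLast?_eq_getLast hne] at h
  exact (Option.some_inj.mp h) ▸ List.getLast_mem hne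

lemma dropLast_append_of_getLast? {l : List α} {c : α} (h : l.getLast? = some c) :
    l.dropLast ++ [c] = l := by
  have hne : l ≠ [] := by rintro rfl; simp at h
  rw [List.getLast?_eq_getLast hne] at h
  rw [← Option.some_inj.mp h] at *
  exact List.dropLast_append_getLast hne

lemma pair_set_cases {β : Type*} {a b c d : β} (hab : a ≠ b)
    (h : ({a, b} : Set β) = {c, d}) : (a = c ∧ b = d) ∨ (a = d ∧ b = c) := by
  have ha : a = c ∨ a = d := by
    have : a ∈ ({c, d} : Set β) := h ▸ (by simp : a ∈ ({a, b} : Set β))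
    simpa using this
  have hb : b = c ∨ b = d := by
    have : b ∈ ({c, d} : Set β) := h ▸ (by simp : b ∈ ({a, b} : Set β))
    simpa using this
  rcases ha with rfl | rfl
  · rcases hb with rfl | rfl
    · exact absurd rfl hab
    · exact Or.inl ⟨rfl, rfl⟩
  · rcases hb with rfl | rfl
    · exact Or.inr ⟨rfl, rfl⟩
    · exact absurd rfl hab

lemma exists_cons_of_length_ge₃ {l : List α} (h : 3 ≤ l.length) :
    ∃ a b c t, l = a :: b :: c :: t := by
  rcases l with - | ⟨a, l⟩
  · simp at h
  rcases l with - | ⟨b, l⟩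
  · simp at h
  rcases l with - | ⟨c, t⟩
  · simp at h
  exact ⟨a, b, c, t, rfl⟩

/-- An infix pair of `r ++ [x]` either lies in `r` or wraps the last element. -/
lemma infix_pair_concat {u w x : α} {r : List α} (h : [u, w] <:+: r ++ [x]) :
    [u, w] <:+: r ∨ (w = x ∧ r.getLast? = some u) := by
  obtain ⟨s, t, hst⟩ := h
  rcases List.eq_nil_or_concat t with rfl | ⟨t', c', rfl⟩
  · right
    rw [List.append_nil] at hst
    have h2 : (s ++ [u]) ++ [w] = r ++ [x] := by
      rw [← hst]; simp
    obtain ⟨h3, h4⟩ := List.append_inj' h2 rfl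
    refine ⟨by simpa using h4, ?_⟩
    rw [← h3, List.getLast?_concat]
  · left
    have h2 : (s ++ [u, w] ++ t') ++ [c'] = r ++ [x] := by
      rw [← hst]; simp [List.concat_eq_append]
    obtain ⟨h3, -⟩ := List.append_inj' h2 rfl
    exact ⟨s, t', h3⟩

/-- The cyclic neighbours of the head of a list that occurs nowhere else. -/
lemma cycAdj_cons_self {x b c : α} {r : List α} (hx : x ∉ r) (hr : 2 ≤ r.length)
    (hb : r.head? = some b) (hc : r.getLast? = some c) {h : α} :
    CycAdj (x :: r) x h ↔ h = b ∨ h = c := by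
  have hrne : r ≠ [] := by rintro rfl; simp at hb
  obtain ⟨r', rfl⟩ : ∃ r', r = b :: r' := by
    rcases r with - | ⟨b', r'⟩
    · simp at hb
    · have hbb : b' = b := by simpa using hb
      exact ⟨r', by rw [hbb]⟩
  have hlen2 : 2 ≤ (x :: b :: r').length := by simp
  rw [cycAdj_iff_infix hlen2]
  have hsplit : (x :: b :: r') ++ (x :: b :: r').take 1 = x :: ((b :: r') ++ [x]) := by simp
  rw [hsplit]
  constructor
  · rintro (hinf | hinf)
    · left
      rcases List.infix_cons_iff.mp hinf with hpre | hinf'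
      · obtain ⟨-, h2⟩ := List.cons_prefix_cons.mp hpre
        exact (List.cons_prefix_cons.mp h2).1
      · rcases infix_pair_concat hinf' with h3 | ⟨-, h4⟩
        · exact absurd (h3.subset (by simp)) hx
        · exact absurd (mem_of_getLast?_eq h4) hx
    · right
      rcases List.infix_cons_iff.mp hinf with hpre | hinf'
      · obtain ⟨rfl, h2⟩ := List.cons_prefix_cons.mp hpre
        exact absurd ((List.cons_prefix_cons.mp h2).1 ▸ (by simp : h ∈ h :: r')) hx
      · rcases infix_pair_concat hinf' with h3 | ⟨-, h4⟩
        · exact absurd (h3.subset (by simp)) hx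
        · rw [h4] at hc
          exact Option.some_inj.mp hc
  · rintro (rfl | rfl)
    · exact Or.inl ⟨[], r' ++ [x], by simp⟩
    · right
      have hdrop : (b :: r').dropLast ++ [h] = b :: r' := dropLast_append_of_getLast? hc
      refine ⟨x :: (b :: r').dropLast, [], ?_⟩
      rw [List.append_nil]
      conv_rhs => rw [← hdrop]
      simp

/-- Triples of consecutive elements in a `pairList` are serially linked. -/
lemma triple_infix_pairList {d e f : Sym2 α} :
    ∀ {a : α} {l : List α}, [d, e, f] <:+: pairList a l →
    ∃ x y z w, d = s(x, y) ∧ e = s(y, z) ∧ f = s(z, w) := by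
  intro a l
  induction l generalizing a with
  | nil => intro h; exact absurd h.length_le (by simp)
  | cons b l ih =>
    intro h
    rw [pairList_cons, List.infix_cons_iff] at h
    rcases h with hpre | hinf
    · obtain ⟨hd, h2⟩ := List.cons_prefix_cons.mp hpre
      rcases l with - | ⟨c, l'⟩
      · exact absurd h2.length_le (by simp)
      obtain ⟨he, h3⟩ := List.cons_prefix_cons.mp h2
      rcases l' with - | ⟨d', l''⟩
      · exact absurd h3.length_le (by simp)
      obtain ⟨hf, -⟩ := List.cons_prefix_cons.mp h3
      exact ⟨a, b, c, d', hd, he, hf⟩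
    · exact ih hinf

/-- Ternary chain predicate along a list. -/
def Tri (P : α → α → α → Prop) : List α → Prop
  | a :: b :: c :: l => P a b c ∧ Tri P (b :: c :: l)
  | _ => True

lemma tri_of_forall_infix {P : α → α → α → Prop} :
    ∀ (M : List α), (∀ d e f, [d, e, f] <:+: M → P d e f) → Tri P M
  | [], _ => trivial
  | [_], _ => trivial
  | [_, _], _ => trivial
  | (a :: b :: c :: l), H =>
    ⟨H a b c ⟨[], l, rfl⟩,
      tri_of_forall_infix (b :: c :: l) fun d e f h =>
        H d e f (h.trans (show (b :: c :: l) <:+ a :: b :: c :: l from ⟨[a], rfl⟩).isInfix)⟩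

lemma sym2_eq_of_two_mem {x y : α} {z : Sym2 α} (hxy : x ≠ y) (hx : x ∈ z) (hy : y ∈ z) :
    z = s(x, y) :=
  Sym2.eq_of_ne_mem hxy hx hy (by simp) (by simp)

/-- Build a serial (pairList) realisation of a coherently linked edge sequence. -/
lemma build {P : Sym2 α → Sym2 α → Sym2 α → Prop}
    (hP : ∀ d e f, P d e f → ∃ u v, e = s(u, v) ∧ u ∈ d ∧ v ∈ f) :
    ∀ (F : List (Sym2 α)) (e₀ f : Sym2 α) (y : α),
      (∀ e ∈ f :: F, ¬ e.IsDiag) → List.Chain' (· ≠ ·) (e₀ :: f :: F) →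
      Tri P (e₀ :: f :: F) → y ∈ e₀ → y ∈ f →
      ∃ m, f :: F = pairList y m := by
  intro F
  induction F with
  | nil =>
    intro e₀ f y _ _ _ _ hyf
    induction f using Sym2.ind with
    | _ p q =>
      rcases Sym2.mem_iff.mp hyf with rfl | rfl
      · exact ⟨[q], rfl⟩
      · exact ⟨[p], by simp [Sym2.eq_swap]⟩
  | cons g F ih =>
    intro e₀ f y hnd hch htri hye hyf
    obtain ⟨hPefg, htri'⟩ := htri
    obtain ⟨u, v, hfs, hud, hvg⟩ := hP _ _ _ hPefg
    have hef : e₀ ≠ f := (List.isChain_cons.mp hch).1 f rfl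
    have hfnd : ¬ f.IsDiag := hnd f (by simp)
    -- coherence : u = y
    have huy : u = y := by
      by_contra hne
      have hyuv : y = u ∨ y = v := by
        rw [hfs] at hyf; exact Sym2.mem_iff.mp hyf
      rcases hyuv with rfl | rfl
      · exact hne rfl
      · -- y = v : f = s(u, y) with u ∈ e₀ , y ∈ e₀
        have : e₀ = s(u, y) := sym2_eq_of_two_mem (fun h => (by
          rw [hfs, h] at hfnd; exact hfnd (Sym2.mk_isDiag_iff.mpr rfl)) ) hud hye
        exact hef (this.trans (by rw [hfs]))
    subst huy
    -- recurse
    have hch' : List.Chain' (· ≠ ·) (f :: g :: F) := (List.isChain_cons.mp hch).2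
    have hvf : v ∈ f := by rw [hfs]; simp
    obtain ⟨m, hm⟩ := ih f g v (fun e he => hnd e (List.mem_cons_of_mem _ he)) hch' htri' hvf hvg
    exact ⟨v :: m, by rw [pairList_cons, ← hm, hfs]⟩

lemma chain'_share_pairList (a : α) (l : List α) :
    List.Chain' (fun e f : Sym2 α => ∃ w, w ∈ e ∧ w ∈ f) (pairList a l) := by
  induction l generalizing a with
  | nil => exact List.IsChain.nil
  | cons b l ih =>
    rw [pairList_cons]
    apply List.isChain_cons.mpr
    refine ⟨?_, ih b⟩
    intro e he
    rcases l with - | ⟨c, l'⟩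
    · simp at he
    · rw [pairList_cons] at he
      simp only [List.head?_cons, Option.mem_def, Option.some_inj] at he
      exact ⟨b, by simp, by rw [← he]; simp⟩

lemma pairList_getLast?_concat (a : α) (l : List α) (b : α) :
    (pairList a (l ++ [b])).getLast? = some (s(l.getLastD a, b)) := by
  rw [pairList_append]
  simp only [pairList_cons, pairList_nil]
  exact List.getLast?_concat

lemma chain_adj_of_pairList {G : SimpleGraph α} :
    ∀ (a : α) (l : List α), (∀ e ∈ pairList a l, e ∈ G.edgeSet) → List.Chain G.Adj a l := by
  intro a l
  induction l generalizing a with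
  | nil => intro; exact List.Chain.nil
  | cons b l ih =>
    intro h
    apply List.chain_cons.mpr
    exact ⟨(G.mem_edgeSet).mp (h _ (by simp)), ih b fun e he => h e (by simp [he])⟩

section WalkLayer

open SimpleGraph

variable {G : SimpleGraph α}

/-- Build a walk from a vertex list with a chain of adjacencies. -/
def mkWalk : ∀ (a : α) (l : List α) (b : α), List.Chain G.Adj a (l ++ [b]) → G.Walk a b
  | _, [], _, h => Walk.cons (List.chain_cons.mp h).1 Walk.nil
  | a, c :: l, b, h =>
    Walk.cons (List.chain_cons.mp h).1
      (mkWalk c l b (List.chain_cons.mp h).2)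

@[simp] lemma mkWalk_support : ∀ (a : α) (l : List α) (b : α) (h), 
    (mkWalk (G := G) a l b h).support = a :: (l ++ [b])
  | _, [], _, _ => rfl
  | a, c :: l, b, h => by
    rw [mkWalk]
    simp only [Walk.support_cons, mkWalk_support c l b]
    exact congrArg (a :: ·) (mkWalk_support c l b _)

@[simp] lemma mkWalk_edges : ∀ (a : α) (l : List α) (b : α) (h),
    (mkWalk (G := G) a l b h).edges = pairList a (l ++ [b])
  | _, [], _, _ => rfl
  | a, c :: l, b, h => by
    rw [mkWalk]
    simp only [Walk.edges_cons, mkWalk_edges c l b]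
    exact congrArg (s(a, c) :: ·) (mkWalk_edges c l b _)

lemma edges_eq_pairList {a b : α} (p : G.Walk a b) :
    p.edges = pairList a p.support.tail := by
  induction p with
  | nil => rfl
  | cons h q ih =>
    rw [Walk.edges_cons, Walk.support_cons, List.tail_cons, ih, q.support_eq_cons]
    rfl

lemma support_tail_closed {a : α} {p : G.Walk a a} (hp : ¬ p.Nil) :
    p.support.tail = p.support.tail.dropLast ++ [a] := by
  have hne : p.support.tail ≠ [] := by
    have : p.support.tail.length = p.length := by
      have := p.length_support
      have h2 := p.support_eq_cons
      rw [h2] at this; simpa using this.symm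
    intro hnil
    rw [hnil] at this
    exact hp (Walk.nil_iff_length_eq.mpr (by simpa using this.symm))
  have h3 : p.support.getLast? = some a := by
    rw [List.getLast?_eq_getLast p.support_ne_nil]
    exact congrArg some p.getLast_support
  rw [p.support_eq_cons] at h3
  have h4 : p.support.tail.getLast? = some a := by
    rcases hlt : p.support.tail with - | ⟨t0, t'⟩
    · exact absurd hlt hne
    · rw [hlt] at h3
      rw [← h3, List.getLast?_cons_cons]
  have hlast : p.support.tail.getLast hne = a := by
    rw [List.getLast?_eq_getLast hne] at h4
    exact Option.some_inj.mp h4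
  conv_lhs => rw [← List.dropLast_append_getLast hne, hlast]

lemma length_support_tail {a b : α} (p : G.Walk a b) :
    p.support.tail.length = p.length := by
  have := p.length_support
  rw [p.support_eq_cons] at this
  simpa using this.symm

/-- Master lemma: membership of an edge pair in the edges of a closed walk is cyclic
adjacency in the cyclic vertex sequence. -/
lemma mem_edges_iff_cycAdj {a : α} {p : G.Walk a a} (hp : 2 ≤ p.length) {x y : α} :
    s(x, y) ∈ p.edges ↔ CycAdj (a :: p.support.tail.dropLast) x y := by
  have hnp : ¬ p.Nil := Walk.not_nil_iff_lt_length.mpr (by omega)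
  have hV : 2 ≤ (a :: p.support.tail.dropLast).length := by
    have h1 : p.support.tail.dropLast.length = p.length - 1 := by
      rw [List.length_dropLast, length_support_tail]
    simp only [List.length_cons, h1]
    omega
  rw [edges_eq_pairList, cycAdj_iff_infix hV]
  conv_lhs => rw [support_tail_closed hnp]
  rw [mem_pairList_iff]
  have heq : a :: (p.support.tail.dropLast ++ [a]) =
      (a :: p.support.tail.dropLast) ++ (a :: p.support.tail.dropLast).take 1 := by simp
  rw [heq]

end WalkLayer

lemma getLast?_cons_of_ne_nil {l : List α} (h : l ≠ []) (x : α) :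
    (x :: l).getLast? = l.getLast? := by
  rcases l with - | ⟨y, l'⟩
  · exact absurd rfl h
  · exact List.getLast?_cons_cons

lemma rotate_append_left (s t : List α) : (s ++ t).rotate s.length = t ++ s := by
  rw [List.rotate_eq_drop_append_take (by simp), List.drop_left, List.take_left]

lemma head_ne_getLast_of_nodup {l : List α} (h : l.Nodup) {b c : α}
    (hb : l.head? = some b) (hc : l.getLast? = some c) (hl : 2 ≤ l.length) : b ≠ c := by
  rcases l with - | ⟨x, l'⟩
  · simp at hb
  have hx : x = b := by simpa using hb
  subst hx
  have hl' : l' ≠ [] := by rintro rfl; simp at hl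
  rw [getLast?_cons_of_ne_nil hl'] at hc
  have : c ∈ l' := mem_of_getLast?_eq hc
  rintro rfl
  exact (List.nodup_cons.mp h).1 this

section Dir2

open SimpleGraph

variable {W : Type*} {X : SimpleGraph W}

lemma dir2core [DecidableEq ↑X.edgeSet] {a : W} (q : X.Walk a a) (hq : q.IsEulerian) (hE : X.edgeSet.Nonempty) :
    ∃ (E : X.edgeSet) (c : X.lineGraph.Walk E E), c.IsHamiltonianCycle ∧
      (∀ f g : X.edgeSet, s(f, g) ∈ c.edges ↔ CycAdj q.edges (f : Sym2 W) (g : Sym2 W)) ∧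
      (∀ (u v : W) (E' : X.edgeSet), (E' : Sym2 W) = s(u, v) → CompatAt c E' u v) := by
  classical
  have htrail := hq.isTrail
  have hnodup : q.edges.Nodup := htrail.edges_nodup
  have hcover : ∀ e, e ∈ X.edgeSet → e ∈ q.edges := fun e he => hq.mem_edges_iff.mpr he
  have hsub : ∀ e ∈ q.edges, e ∈ X.edgeSet := fun e he => q.edges_subset_edgeSet he
  have hnnil : ¬ q.Nil := by
    intro hnil
    obtain ⟨e₀, he₀⟩ := hE
    have hmem : e₀ ∈ q.edges := hcover _ he₀
    rw [Walk.nil_iff_length_eq] at hnil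
    have hed : q.edges = [] := List.eq_nil_of_length_eq_zero (by rw [q.length_edges]; exact hnil)
    rw [hed] at hmem
    simp at hmem
  have hdecomp := support_tail_closed hnnil
  have hlents := length_support_tail q
  have hlen3 : 3 ≤ q.length := by
    rcases hdl : q.support.tail.dropLast with - | ⟨x, l'⟩
    · exfalso
      have h1 : q.edges = pairList a ([] ++ [a]) := by
        rw [edges_eq_pairList]
        conv_lhs => rw [hdecomp, hdl]
      simp only [List.nil_append] at h1
      have hmem : s(a, a) ∈ q.edges := by rw [h1]; simp [pairList]
      exact (X.not_isDiag_of_mem_edgeSet (hsub _ hmem)) (by simp)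
    · rcases hl' : l' with - | ⟨x2, l''⟩
      · exfalso
        have h1 : q.edges = pairList a ([x] ++ [a]) := by
          rw [edges_eq_pairList]
          conv_lhs => rw [hdecomp, hdl, hl']
        simp only [pairList, List.cons_append, List.nil_append] at h1
        rw [h1] at hnodup
        have : s(a, x) = s(x, a) := Sym2.eq_swap
        simp [this] at hnodup
      · have h2 : q.support.tail.dropLast.length = q.length - 1 := by
          rw [List.length_dropLast, hlents]
        rw [hdl, hl'] at h2
        simp at h2
        omega
  -- the subtype list of edges
  set L := q.edges with hLdef
  set C : List X.edgeSet := L.pmap (fun e he => (⟨e, he⟩ : X.edgeSet)) hsub with hCdef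
  have hmapC : C.map Subtype.val = L := by
    rw [hCdef, List.map_pmap]
    exact (List.pmap_eq_map _).trans (List.map_id _)
  have hCnd : C.Nodup := List.Nodup.of_map Subtype.val (by rwa [hmapC])
  have hlenL : L.length = q.length := q.length_edges
  have hlenC : C.length = L.length := by rw [← hmapC, List.length_map]
  have hCall : ∀ E : X.edgeSet, C.count E = 1 := by
    intro E
    have h1 := List.count_map_of_injective C Subtype.val Subtype.val_injective E
    rw [hmapC] at h1
    rw [← h1]
    exact hq _ E.2
  have hCmem : ∀ E : X.edgeSet, E ∈ C := by
    intro E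
    have := hCall E
    exact List.count_pos_iff.mp (by omega)
  -- chains
  have hchainL : List.Chain' (fun e f : Sym2 W => e ≠ f ∧ ∃ w, w ∈ e ∧ w ∈ f) L := by
    have h1 : List.Chain' (· ≠ ·) L := List.Pairwise.isChain hnodup
    have h2 : List.Chain' (fun e f : Sym2 W => ∃ w, w ∈ e ∧ w ∈ f) L := by
      rw [hLdef, edges_eq_pairList]
      exact chain'_share_pairList _ _
    exact List.isChain_iff_getElem.mpr fun i h =>
      ⟨List.isChain_iff_getElem.mp h1 i h, List.isChain_iff_getElem.mp h2 i h⟩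
  have hchainC : List.Chain' X.lineGraph.Adj C := by
    rw [← hmapC] at hchainL
    replace hchainL := (List.isChain_map _).mp hchainL
    exact hchainL.imp fun e f h =>
      lineGraph_adj_iff_exists.mpr ⟨fun hEq => h.1 (congrArg Subtype.val hEq), h.2⟩
  -- head and last of L contain a
  obtain ⟨t₀, t₁, trest, hts⟩ : ∃ t₀ t₁ trest, q.support.tail = t₀ :: t₁ :: trest := by
    rcases h : q.support.tail with - | ⟨t₀, l'⟩
    · exfalso; rw [h] at hlents; simp at hlents; omega
    rcases h' : l' with - | ⟨t₁, trest⟩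
    · exfalso; rw [h, h'] at hlents; simp at hlents; omega
    exact ⟨t₀, t₁, trest, by simp [h, h']⟩
  have hLpair : L = pairList a q.support.tail := by rw [hLdef, edges_eq_pairList]
  have hLhead : L.head? = some s(a, t₀) := by rw [hLpair, hts]; rfl
  have hgetLastD : q.support.tail.getLastD a = a := by
    rw [List.getLastD_eq_getLast?, hdecomp, List.getLast?_concat]
    rfl
  have hLlast : L.getLast? = some (s(q.support.tail.dropLast.getLastD a, a)) := by
    conv_lhs => rw [hLpair, hdecomp]
    exact pairList_getLast?_concat _ _ _
  -- shape of C
  obtain ⟨E1, E2, r', hCshape⟩ : ∃ E1 E2 r', C = E1 :: E2 :: r' := by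
    rcases h : C with - | ⟨E1, l'⟩
    · exfalso; rw [h] at hlenC; rw [← hlenC] at hlenL; simp at hlenL; omega
    rcases h' : l' with - | ⟨E2, r'⟩
    · exfalso; rw [h, h'] at hlenC; rw [← hlenC] at hlenL; simp at hlenL; omega
    exact ⟨E1, E2, r', by simp [h, h']⟩
  have hr'ne : r' ≠ [] := by
    rintro rfl
    rw [hCshape] at hlenC; rw [← hlenC] at hlenL; simp at hlenL; omega
  -- closing adjacency
  have hCLast : C.getLast? = some (C.getLast (by rw [hCshape]; simp)) :=
    List.getLast?_eq_getLast _
  set D := C.getLast (by rw [hCshape]; simp) with hDdef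
  have hDval : (D : Sym2 W) = s(q.support.tail.dropLast.getLastD a, a) := by
    have h1 : (C.map Subtype.val).getLast? = some (D : Sym2 W) := by
      rw [List.getLast?_map, hCLast]; rfl
    rw [hmapC, hLlast] at h1
    exact (Option.some_inj.mp h1).symm
  have hE1val : (E1 : Sym2 W) = s(a, t₀) := by
    have h1 : (C.map Subtype.val).head? = some (E1 : Sym2 W) := by
      rw [hCshape]; rfl
    rw [hmapC, hLhead] at h1
    exact (Option.some_inj.mp h1).symm
  have hDmem : a ∈ (D : Sym2 W) := by rw [hDval]; simp
  have hE1mem : a ∈ (E1 : Sym2 W) := by rw [hE1val]; simp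
  have hDneE1 : D ≠ E1 := by
    intro hEq
    have hb : C.head? = some E1 := by rw [hCshape]; rfl
    have : E1 ≠ D := head_ne_getLast_of_nodup hCnd hb hCLast
      (by rw [hCshape]; simp)
    exact this hEq.symm
  have hadjDE1 : X.lineGraph.Adj D E1 :=
    lineGraph_adj_iff_exists.mpr ⟨hDneE1, a, hDmem, hE1mem⟩
  -- full chain and walk
  have hchainFull : List.Chain' X.lineGraph.Adj (C ++ [E1]) := by
    apply List.isChain_append.mpr
    refine ⟨hchainC, List.isChain_singleton _, ?_⟩
    intro x hx y hy
    simp only [List.head?_cons, Option.mem_def, Option.some_inj] at hy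
    rw [hCLast] at hx
    simp only [Option.mem_def, Option.some_inj] at hx
    cases hy
    cases hx
    exact hadjDE1
  have hchain1 : List.Chain X.lineGraph.Adj E1 (E2 :: (r' ++ [E1])) := by
    have h1 : C ++ [E1] = E1 :: (E2 :: (r' ++ [E1])) := by rw [hCshape]; simp
    rw [h1] at hchainFull
    exact hchainFull
  have hadj12 : X.lineGraph.Adj E1 E2 := (List.chain_cons.mp hchain1).1
  have hchain2 : List.Chain X.lineGraph.Adj E2 (r' ++ [E1]) := (List.chain_cons.mp hchain1).2
  set c : X.lineGraph.Walk E1 E1 := SimpleGraph.Walk.cons hadj12 (mkWalk E2 r' E1 hchain2)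
    with hcdef
  have hcsupp : c.support = E1 :: E2 :: (r' ++ [E1]) := by
    rw [hcdef, SimpleGraph.Walk.support_cons, mkWalk_support]
  have hcedges : c.edges = pairList E1 ((E2 :: r') ++ [E1]) := by
    rw [hcdef, SimpleGraph.Walk.edges_cons, mkWalk_edges]
    rfl
  -- the walk is a cycle
  have hE1notin : E1 ∉ E2 :: r' := by
    have h := hCnd; rw [hCshape, List.nodup_cons] at h; exact h.1
  have hnd2 : (E2 :: r').Nodup := by
    have h := hCnd; rw [hCshape, List.nodup_cons] at h; exact h.2
  have hpath : (mkWalk E2 r' E1 hchain2).IsPath := by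
    rw [SimpleGraph.Walk.isPath_def, mkWalk_support]
    rw [show E2 :: (r' ++ [E1]) = (E2 :: r') ++ [E1] from by simp, List.nodup_append]
    refine ⟨hnd2, List.nodup_singleton _, ?_⟩
    intro x hx y hy hxy
    simp only [List.mem_singleton] at hy
    rw [hxy, hy] at hx
    exact hE1notin hx
  have hnotmem : s(E1, E2) ∉ (mkWalk E2 r' E1 hchain2).edges := by
    rw [mkWalk_edges]
    intro hmem
    have h1 : E1 ≠ E2 := by rintro rfl; exact hE1notin (by simp)
    rcases mem_pairList_iff.mp hmem with hinf | hinf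
    · rw [show E2 :: (r' ++ [E1]) = (E2 :: r') ++ [E1] from by simp] at hinf
      rcases infix_pair_concat hinf with h2 | ⟨h2, -⟩
      · exact hE1notin (h2.subset (by simp))
      · exact h1 h2.symm
    · rw [show E2 :: (r' ++ [E1]) = (E2 :: r') ++ [E1] from by simp] at hinf
      rcases infix_pair_concat hinf with h2 | ⟨-, h2⟩
      · exact hE1notin (h2.subset (by simp))
      · rw [getLast?_cons_of_ne_nil hr'ne] at h2
        exact (List.nodup_cons.mp hnd2).1 (mem_of_getLast?_eq h2)
  have hcycle : c.IsCycle :=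
    (SimpleGraph.Walk.cons_isCycle_iff _ _).mpr ⟨hpath, hnotmem⟩
  have hcnnil : ¬ c.Nil := SimpleGraph.Walk.not_nil_cons
  have hcham : c.IsHamiltonianCycle := by
    refine ⟨hcycle, ?_⟩
    intro E
    rw [SimpleGraph.Walk.support_tail_of_not_nil c hcnnil, hcsupp, List.tail_cons]
    have hperm : (E2 :: (r' ++ [E1])).Perm C := by
      rw [hCshape]
      calc E2 :: (r' ++ [E1]) ~ E2 :: (E1 :: r') :=
            List.Perm.cons _ (List.perm_append_singleton _ _)
        _ ~ E1 :: E2 :: r' := List.Perm.swap _ _ _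
    exact @List.count_eq_one_of_mem _ instBEqOfDecidableEq _ _ _ (hperm.nodup_iff.mpr hCnd) (hperm.mem_iff.mpr (hCmem E))
  -- characterization of edges of c
  have hclen : 2 ≤ c.length := by
    have h1 : c.edges.length = c.length := c.length_edges
    rw [hcedges] at h1
    simp only [pairList_length, List.length_append, List.length_cons,
      List.length_singleton] at h1
    omega
  have hctail : E1 :: c.support.tail.dropLast = C := by
    rw [hcsupp, List.tail_cons,
      show E2 :: (r' ++ [E1]) = (E2 :: r') ++ [E1] from by simp,
      List.dropLast_concat, hCshape]
  have hchar : ∀ f g : X.edgeSet, s(f, g) ∈ c.edges ↔ CycAdj L (f : Sym2 W) (g : Sym2 W) := by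
    intro f g
    rw [mem_edges_iff_cycAdj hclen, hctail, ← hmapC]
    exact (cycAdj_map Subtype.val_injective).symm
  -- compatibility
  have hcompat : ∀ (u v : W) (E' : X.edgeSet), (E' : Sym2 W) = s(u, v) → CompatAt c E' u v := by
    intro u v E' hEuv
    have hEL : (E' : Sym2 W) ∈ L := hcover _ E'.2
    obtain ⟨s₁, t₁sub, hsplitL⟩ := List.append_of_mem hEL
    have hrot1 : L.rotate s₁.length = (E' : Sym2 W) :: (t₁sub ++ s₁) := by
      rw [hsplitL, rotate_append_left]
      rfl
    set r := t₁sub ++ s₁ with hrdef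
    have hrotated : L ~r ((E' : Sym2 W) :: r) := ⟨s₁.length, hrot1⟩
    have hndEr : ((E' : Sym2 W) :: r).Nodup := (hrotated.nodup_iff).mp hnodup
    have hEnotr : (E' : Sym2 W) ∉ r := (List.nodup_cons.mp hndEr).1
    have hndr : r.Nodup := (List.nodup_cons.mp hndEr).2
    have hlenEr : L.length = r.length + 1 := by
      have h1 := congrArg List.length hrot1
      simpa using h1
    have hlenr : 2 ≤ r.length := by omega
    obtain ⟨b, r₂, hrshape⟩ : ∃ b r₂, r = b :: r₂ := by
      rcases hrr : r with - | ⟨b, r₂⟩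
      · rw [hrr] at hlenr; simp at hlenr
      · exact ⟨b, r₂, rfl⟩
    have hr₂ne : r₂ ≠ [] := by
      rintro rfl
      rw [hrshape] at hlenr; simp at hlenr
    have hbhead : r.head? = some b := by rw [hrshape]; rfl
    obtain ⟨d, hdlast⟩ : ∃ d, r.getLast? = some d :=
      ⟨_, List.getLast?_eq_getLast (by rw [hrshape]; simp)⟩
    have hneigh : ∀ h : X.edgeSet,
        (s(E', h) ∈ c.edges ↔ ((h : Sym2 W) = b ∨ (h : Sym2 W) = d)) := by
      intro h
      rw [hchar E' h, cycAdj_congr hrotated]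
      exact cycAdj_cons_self hEnotr hlenr hbhead hdlast
    -- the wrap-around triple
    have hsplit2 : (E' : Sym2 W) :: r = ((E' : Sym2 W) :: r).dropLast ++ [d] := by
      refine (dropLast_append_of_getLast? ?_).symm
      rw [getLast?_cons_of_ne_nil (by rw [hrshape]; simp)]
      exact hdlast
    have hrot2 : L.rotate (s₁.length + r.length) = d :: (E' : Sym2 W) :: b :: r₂.dropLast := by
      rw [← List.rotate_rotate, hrot1]
      have hlm : (((E' : Sym2 W) :: r).dropLast).length = r.length := by simp
      conv_lhs => rw [hsplit2, ← hlm]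
      rw [rotate_concat]
      congr 1
      rw [hrshape]
      rcases hr2 : r₂ with - | ⟨c₂, r₃⟩
      · exact absurd hr2 hr₂ne
      · simp
    have htrip : ∃ x y z w, d = s(x, y) ∧ (E' : Sym2 W) = s(y, z) ∧ b = s(z, w) := by
      apply triple_infix_pairList (a := a) (l := q.support.tail ++ [t₀, t₁])
      have hfull : pairList a (q.support.tail ++ [t₀, t₁]) = L ++ L.take 2 := by
        rw [pairList_append, hgetLastD]
        congr 1
        · exact hLpair.symm
        · rw [hLpair, hts]
          rfl
      rw [hfull]
      have hLpos : 0 < L.length := by omega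
      have hpre : [d, (E' : Sym2 W), b] <+:
          L.rotate ((s₁.length + r.length) % L.length) := by
        rw [List.rotate_mod, hrot2]
        exact ⟨r₂.dropLast, rfl⟩
      have hinf := infix_of_prefix_rotate (w := [d, (E' : Sym2 W), b]) (v := L)
        (Nat.mod_lt _ hLpos) hpre
      simpa using hinf
    obtain ⟨x', y', z', w', hdv, hEv, hbv⟩ := htrip
    have hbL : b ∈ L := hrotated.mem_iff.mpr (by rw [hrshape]; simp)
    have hdL : d ∈ L := hrotated.mem_iff.mpr (List.mem_cons_of_mem _ (mem_of_getLast?_eq hdlast))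
    have hset : {h : X.edgeSet | s(E', h) ∈ c.edges} =
        {(⟨b, hsub _ hbL⟩ : X.edgeSet), (⟨d, hsub _ hdL⟩ : X.edgeSet)} := by
      ext h
      simp only [Set.mem_setOf_eq, Set.mem_insert_iff, Set.mem_singleton_iff]
      rw [hneigh h]
      constructor
      · rintro (h1 | h1)
        · exact Or.inl (Subtype.ext h1)
        · exact Or.inr (Subtype.ext h1)
      · rintro (rfl | rfl)
        · exact Or.inl rfl
        · exact Or.inr rfl
    have hbd : b ≠ d := by
      have hdl2 := hdlast
      rw [hrshape, getLast?_cons_of_ne_nil hr₂ne] at hdl2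
      have hdr₂ : d ∈ r₂ := mem_of_getLast?_eq hdl2
      rintro rfl
      exact (List.nodup_cons.mp (hrshape ▸ hndr)).1 hdr₂
    have hSne : (⟨b, hsub _ hbL⟩ : X.edgeSet) ≠ ⟨d, hsub _ hdL⟩ :=
      fun hEq => hbd (congrArg Subtype.val hEq)
    have hy'd : y' ∈ d := by rw [hdv]; simp
    have hz'b : z' ∈ b := by rw [hbv]; simp
    rcases Sym2.eq_iff.mp (hEuv.symm.trans hEv) with ⟨rfl, rfl⟩ | ⟨rfl, rfl⟩
    · exact ⟨⟨d, hsub _ hdL⟩, ⟨b, hsub _ hbL⟩, hSne.symm,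
        by rw [hset]; exact Set.pair_comm _ _, hy'd, hz'b⟩
    · exact ⟨⟨b, hsub _ hbL⟩, ⟨d, hsub _ hdL⟩, hSne,
        by rw [hset], hz'b, hy'd⟩
  exact ⟨E1, c, hcham, hchar, hcompat⟩


end Dir2

lemma ham_cast {β : Type*} {G : SimpleGraph β} {a : β} {p : G.Walk a a}
    {i1 i2 : DecidableEq β} (h : @SimpleGraph.Walk.IsHamiltonianCycle β i1 G a p) :
    @SimpleGraph.Walk.IsHamiltonianCycle β i2 G a p := by
  cases Subsingleton.elim i1 i2
  exact h

section Dir1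

open SimpleGraph

variable {W : Type*} {X : SimpleGraph W}

lemma dir1core [DecidableEq ↑X.edgeSet] {A : X.edgeSet} (c : X.lineGraph.Walk A A) (hham : c.IsHamiltonianCycle)
    (hcompat : ∀ (u v : W) (E : X.edgeSet), (E : Sym2 W) = s(u, v) → CompatAt c E u v) :
    ∃ (w₀ : W) (p : X.Walk w₀ w₀), p.IsEulerian ∧
      ∀ f g : X.edgeSet,
        (CycAdj p.edges (f : Sym2 W) (g : Sym2 W) ↔ s(f, g) ∈ c.edges) := by
  classical
  have hcyc := hham.isCycle
  have hlen3 : 3 ≤ c.length := hcyc.three_le_length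
  have hnnil : ¬ c.Nil := Walk.not_nil_iff_lt_length.mpr (by omega)
  have ht : c.support.tail.Nodup := hcyc.support_nodup
  have hdecomp := support_tail_closed hnnil
  have hlents := length_support_tail c
  set C : List X.edgeSet := A :: c.support.tail.dropLast with hCdef
  have hCnd : C.Nodup := by
    rw [hCdef, List.nodup_cons]
    rw [hdecomp, List.nodup_append] at ht
    exact ⟨fun hA => ht.2.2 _ hA _ (by simp) rfl, ht.1⟩
  have hlenC : C.length = c.length := by
    rw [hCdef]
    simp only [List.length_cons, List.length_dropLast, hlents]
    omega
  have hCmem : ∀ E : X.edgeSet, E ∈ C := by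
    intro E
    have h1 : E ∈ c.support := hham.mem_support E
    rw [c.support_eq_cons] at h1
    rcases List.mem_cons.mp h1 with rfl | h2
    · exact List.mem_cons_self
    · rw [hdecomp] at h2
      rcases List.mem_append.mp h2 with h3 | h3
      · exact List.mem_cons_of_mem _ h3
      · simp only [List.mem_singleton] at h3
        rw [h3]; exact List.mem_cons_self
  have hchar0 : ∀ f g : X.edgeSet, s(f, g) ∈ c.edges ↔ CycAdj C f g := fun f g =>
    mem_edges_iff_cycAdj (by omega)
  set L : List (Sym2 W) := C.map Subtype.val with hLdef
  have hLnd : L.Nodup := hCnd.map Subtype.val_injective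
  have hLsub : ∀ e ∈ L, e ∈ X.edgeSet := by
    intro e he
    obtain ⟨E, -, rfl⟩ := List.mem_map.mp he
    exact E.2
  have hLcover : ∀ e ∈ X.edgeSet, e ∈ L := fun e he =>
    List.mem_map.mpr ⟨⟨e, he⟩, hCmem _, rfl⟩
  have hlenL : L.length = c.length := by rw [hLdef, List.length_map, hlenC]
  have hchar1 : ∀ f g : X.edgeSet, s(f, g) ∈ c.edges ↔ CycAdj L (f : Sym2 W) (g : Sym2 W) := by
    intro f g
    rw [hchar0, hLdef]
    exact (cycAdj_map Subtype.val_injective).symm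
  -- the local compatibility condition, for arbitrary rotations
  have hLC : ∀ (n : ℕ) (d e f : Sym2 W) (rest : List (Sym2 W)),
      L.rotate n = d :: e :: f :: rest → ∃ u v, e = s(u, v) ∧ u ∈ d ∧ v ∈ f := by
    intro n d e f rest hrot
    have hrot1 : L ~r (d :: e :: f :: rest) := ⟨n, hrot⟩
    have hrot2 : L ~r (e :: (f :: (rest ++ [d]))) := by
      refine hrot1.trans ⟨1, ?_⟩
      rw [List.rotate_cons_succ, List.rotate_zero]
      simp
    have hnodupEr := hrot2.nodup_iff.mp hLnd
    have henotr : e ∉ f :: (rest ++ [d]) := (List.nodup_cons.mp hnodupEr).1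
    have hndr : (f :: (rest ++ [d])).Nodup := (List.nodup_cons.mp hnodupEr).2
    have hlenr : 2 ≤ (f :: (rest ++ [d])).length := by simp
    have hbhead : (f :: (rest ++ [d])).head? = some f := rfl
    have hdlast : (f :: (rest ++ [d])).getLast? = some d := by
      rw [show f :: (rest ++ [d]) = (f :: rest) ++ [d] from by simp]
      exact List.getLast?_concat
    have heL : e ∈ L := hrot2.mem_iff.mpr (by simp)
    have heEdge : e ∈ X.edgeSet := hLsub _ heL
    induction e using Sym2.ind with
    | _ u₀ v₀ =>
      obtain ⟨f₁, g₁, hne, hset, hu₀, hv₀⟩ := hcompat u₀ v₀ ⟨s(u₀, v₀), heEdge⟩ rfl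
      have hfL : f ∈ L := hrot2.mem_iff.mpr (by simp)
      have hdL : d ∈ L := hrot2.mem_iff.mpr (by simp)
      have hnb : ∀ h : X.edgeSet,
          s((⟨s(u₀, v₀), heEdge⟩ : X.edgeSet), h) ∈ c.edges ↔
            ((h : Sym2 W) = f ∨ (h : Sym2 W) = d) := by
        intro h
        rw [hchar1, cycAdj_congr hrot2]
        exact cycAdj_cons_self henotr hlenr hbhead hdlast
      have hsetEq : ({f₁, g₁} : Set X.edgeSet) =
          {(⟨f, hLsub _ hfL⟩ : X.edgeSet), (⟨d, hLsub _ hdL⟩ : X.edgeSet)} := by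
        rw [← hset]
        ext h
        simp only [Set.mem_setOf_eq, Set.mem_insert_iff, Set.mem_singleton_iff]
        rw [hnb h]
        constructor
        · rintro (h1 | h1)
          · exact Or.inl (Subtype.ext h1)
          · exact Or.inr (Subtype.ext h1)
        · rintro (rfl | rfl)
          · exact Or.inl rfl
          · exact Or.inr rfl
      rcases pair_set_cases hne hsetEq with ⟨h1, h2⟩ | ⟨h1, h2⟩
      · -- f₁ = fS, g₁ = dS : u₀ ∈ f, v₀ ∈ d
        refine ⟨v₀, u₀, Sym2.eq_swap, ?_, ?_⟩
        · have := hv₀; rw [h2] at this; exact this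
        · have := hu₀; rw [h1] at this; exact this
      · -- f₁ = dS, g₁ = fS : u₀ ∈ d, v₀ ∈ f
        refine ⟨u₀, v₀, rfl, ?_, ?_⟩
        · have := hu₀; rw [h1] at this; exact this
        · have := hv₀; rw [h2] at this; exact this
  -- shape of L
  obtain ⟨e₁, e₂, e₃, Lrest, hLshape⟩ :
      ∃ e₁ e₂ e₃ Lrest, L = e₁ :: e₂ :: e₃ :: Lrest :=
    exists_cons_of_length_ge₃ (by omega)
  have hLne : L ≠ [] := by rw [hLshape]; simp
  -- the last edge of L
  obtain ⟨eK, hKlast⟩ : ∃ eK, L.getLast? = some eK :=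
    ⟨_, List.getLast?_eq_getLast hLne⟩
  have hKL : eK ∈ L := mem_of_getLast?_eq hKlast
  have hLdecomp : L = L.dropLast ++ [eK] := (dropLast_append_of_getLast? hKlast).symm
  have he₁K : e₁ ≠ eK := by
    refine head_ne_getLast_of_nodup hLnd ?_ hKlast (by rw [hLshape]; simp)
    rw [hLshape]; rfl
  -- wrap-around triple gives the starting data
  obtain ⟨w₀, y, hw, hwK, hyE2⟩ : ∃ w₀ y, e₁ = s(w₀, y) ∧ w₀ ∈ eK ∧ y ∈ e₂ := by
    have hrotK : L.rotate L.dropLast.length = eK :: L.dropLast := by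
      have h0 := rotate_concat L.dropLast eK
      rw [← hLdecomp] at h0
      exact h0
    have hdrop : L.dropLast = e₁ :: e₂ :: (e₃ :: Lrest).dropLast := by
      rw [hLshape, List.dropLast_cons₂, List.dropLast_cons₂]
    rw [hdrop] at hrotK
    obtain ⟨u, v, h1, h2, h3⟩ := hLC _ _ _ _ _ hrotK
    exact ⟨u, v, h1, h2, h3⟩
  -- the triple condition on L ++ [e₁]
  have htriFull : Tri (fun d e f => ∃ u v, e = s(u, v) ∧ u ∈ d ∧ v ∈ f) (L ++ [e₁]) := by
    apply tri_of_forall_infix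
    intro d e f hinf
    have htk : L ++ [e₁] <+: L ++ L.take 2 := by
      apply (List.prefix_append_right_inj L).mpr
      rw [show [e₁] = L.take 1 from by rw [hLshape]; rfl]
      exact List.prefix_take_iff.mpr ⟨List.take_prefix _ _, by simp⟩
    have hinf2 : [d, e, f] <:+: L ++ L.take 2 := hinf.trans htk.isInfix
    obtain ⟨n, -, hpre⟩ := prefix_rotate_of_infix (w := [d, e, f]) (v := L) (by simp)
      (by rw [hLshape]; simp) (by simpa using hinf2)
    obtain ⟨t, hT⟩ := hpre
    exact hLC n d e f t (by rw [← hT]; rfl)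
  -- run the builder
  have hydiag : y ∈ e₁ := by rw [hw]; simp
  obtain ⟨m, hm⟩ : ∃ m, e₂ :: ((e₃ :: Lrest) ++ [e₁]) = pairList y m := by
    apply build (fun d e f h => h) ((e₃ :: Lrest) ++ [e₁]) e₁ e₂ y
    · intro e he
      rcases List.mem_cons.mp he with rfl | he2
      · exact X.not_isDiag_of_mem_edgeSet (hLsub _ (by rw [hLshape]; simp))
      · rcases List.mem_append.mp he2 with h3 | h3
        · exact X.not_isDiag_of_mem_edgeSet (hLsub _ (by rw [hLshape]; simp [h3]))
        · simp only [List.mem_singleton] at h3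
          rw [h3]
          exact X.not_isDiag_of_mem_edgeSet (hLsub _ (by rw [hLshape]; simp))
    · have hcc : List.Chain' (· ≠ ·) (L ++ [e₁]) := by
        apply List.isChain_append.mpr
        refine ⟨List.Pairwise.isChain hLnd, List.isChain_singleton _, ?_⟩
        intro x hx y' hy'
        simp only [List.head?_cons, Option.mem_def, Option.some_inj] at hy'
        rw [hKlast] at hx
        simp only [Option.mem_def, Option.some_inj] at hx
        rw [← hx, ← hy']
        exact fun hEq => he₁K hEq.symm
      rw [hLshape] at hcc
      simpa using hcc
    · have := htriFull
      rw [hLshape] at this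
      simpa using this
    · exact hydiag
    · exact hyE2
  have hFULL : L ++ [e₁] = pairList w₀ (y :: m) := by
    rw [hLshape]
    simp only [List.cons_append]
    rw [show e₂ :: e₃ :: (Lrest ++ [e₁]) = e₂ :: ((e₃ :: Lrest) ++ [e₁]) from by simp, hm,
      pairList_cons, ← hw]
  -- unwrap
  have hymne : (y :: m) ≠ [] := by simp
  obtain ⟨tl, htl⟩ : ∃ tl, (y :: m).getLast? = some tl :=
    ⟨_, List.getLast?_eq_getLast hymne⟩
  have hvm : (y :: m).dropLast ++ [tl] = y :: m := dropLast_append_of_getLast? htl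
  set vs := (y :: m).dropLast with hvsdef
  have hFULL2 : L ++ [e₁] = pairList w₀ vs ++ [s(vs.getLastD w₀, tl)] := by
    rw [hFULL, ← hvm, pairList_append]
    rfl
  obtain ⟨hL2, he₁2⟩ : L = pairList w₀ vs ∧ [e₁] = [s(vs.getLastD w₀, tl)] :=
    List.append_inj' hFULL2 rfl
  have he₁eq : e₁ = s(vs.getLastD w₀, tl) := by simpa using he₁2
  have hvsne : vs ≠ [] := by
    intro h
    rw [h] at hL2
    exact hLne (by rw [hL2]; rfl)
  -- vs.getLastD w₀ ∈ eK
  have hwmemK : vs.getLastD w₀ ∈ eK := by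
    have h1 : L.getLast? = some (s(vs.dropLast.getLastD w₀, vs.getLast hvsne)) := by
      conv_lhs => rw [hL2, ← List.dropLast_append_getLast hvsne]
      exact pairList_getLast?_concat _ _ _
    rw [hKlast] at h1
    have h2 : vs.getLastD w₀ = vs.getLast hvsne := by
      rw [List.getLastD_eq_getLast?, List.getLast?_eq_getLast hvsne]
      rfl
    rw [h2, Option.some_inj.mp h1]
    simp
  -- rule out the bad orientation
  have hwky : vs.getLastD w₀ = w₀ := by
    rcases Sym2.eq_iff.mp (hw.symm.trans he₁eq) with ⟨h1, -⟩ | ⟨h1, h2⟩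
    · exact h1.symm
    · exfalso
      have hw₀y : w₀ ≠ y := by
        intro hEq
        have : ¬ (e₁ : Sym2 W).IsDiag :=
          X.not_isDiag_of_mem_edgeSet (hLsub _ (by rw [hLshape]; simp))
        rw [hw, hEq] at this
        exact this (Sym2.mk_isDiag_iff.mpr rfl)
      have hyK : y ∈ eK := by rw [h2]; exact hwmemK
      have : eK = s(w₀, y) := sym2_eq_of_two_mem hw₀y hwK hyK
      exact he₁K (hw.trans this.symm)
  have hvslast : vs = vs.dropLast ++ [w₀] := by
    conv_lhs => rw [← List.dropLast_append_getLast hvsne]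
    congr 1
    rw [← hwky, List.getLastD_eq_getLast?, List.getLast?_eq_getLast hvsne]
    rfl
  have hLfinal : L = pairList w₀ (vs.dropLast ++ [w₀]) := by rw [hL2, ← hvslast]
  -- build the Euler tour
  have hchain : List.Chain X.Adj w₀ (vs.dropLast ++ [w₀]) := by
    apply chain_adj_of_pairList
    rw [← hLfinal]
    exact hLsub
  refine ⟨w₀, mkWalk w₀ vs.dropLast w₀ hchain, ?_, ?_⟩
  · apply SimpleGraph.Walk.IsTrail.isEulerian_of_forall_mem
    · rw [SimpleGraph.Walk.isTrail_def, mkWalk_edges, ← hLfinal]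
      exact hLnd
    · intro e he
      rw [mkWalk_edges, ← hLfinal]
      exact hLcover e he
  · intro f g
    rw [mkWalk_edges, ← hLfinal, hchar1]
end Dir1

end EKAux

/-- For a connected simple graph `X` all of whose degrees are even, a
Hamilton decomposition of `L(X)` that is everywhere Euler tour compatible is equivalent to a
perfect set of Euler tours of `X`: one exists if and only if the other does.  (A set of Euler
tours is perfect if every 2-path of `X` — every pair of adjacent edges — occurs in exactly
one of the tours.) -/

theorem everywhere_compatible_decomposition_iff_perfect_set_of_euler_tours {W : Type*}
    [Fintype W] (X : SimpleGraph W) (hconn : X.Connected)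
    (heven : ∀ w : W, Even (Nat.card (X.neighborSet w))) :
    (∃ (n : ℕ) (x : Fin n → X.edgeSet) (c : ∀ i, X.lineGraph.Walk (x i) (x i)),
        IsHamDecompFam X.lineGraph x c ∧
        (∀ e ∈ X.lineGraph.edgeSet, ∃ i, e ∈ (c i).edges) ∧
        ∀ (i : Fin n) (u v : W) (E : X.edgeSet),
          (E : Sym2 W) = s(u, v) → CompatAt (c i) E u v) ↔
      (∃ (m : ℕ) (w : Fin m → W) (p : ∀ i, X.Walk (w i) (w i)),
        (∀ i, (p i).IsEulerian) ∧
        ∀ f g : X.edgeSet, X.lineGraph.Adj f g →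
          ∃! i, TwoPathIn (p i) (f : Sym2 W) (g : Sym2 W)) := by
  classical
  rcases Set.eq_empty_or_nonempty X.edgeSet with hempty | hne
  · constructor
    · intro _
      refine ⟨1, fun _ => hconn.nonempty.some, fun _ => SimpleGraph.Walk.nil, ?_, ?_⟩
      · intro i e he
        rw [hempty] at he
        exact absurd he (Set.notMem_empty e)
      · intro f g _
        exact absurd f.2 (by simp [hempty])
    · intro _
      refine ⟨0, Fin.elim0, fun i => i.elim0, ⟨fun i => i.elim0, fun i => i.elim0⟩, ?_,
        fun i => i.elim0⟩
      intro e
      induction e using Sym2.ind with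
      | _ f g =>
        intro he
        exact absurd f.2 (by simp [hempty])
  · constructor
    · rintro ⟨n, x, c, ⟨hham, hdisj⟩, hcover, hcompat⟩
      have hmk : ∀ i : Fin n, ∃ (w₀ : W) (p : X.Walk w₀ w₀), p.IsEulerian ∧
          ∀ f g : X.edgeSet,
            (EKAux.CycAdj p.edges (f : Sym2 W) (g : Sym2 W) ↔ s(f, g) ∈ (c i).edges) :=
        fun i => EKAux.dir1core (c i) (EKAux.ham_cast (hham i)) (fun u v E hE => hcompat i u v E hE)
      choose w p hEuler hchar using hmk
      refine ⟨n, w, p, hEuler, ?_⟩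
      intro f g hadj
      obtain ⟨i, hi⟩ := hcover _ ((X.lineGraph.mem_edgeSet).mpr hadj)
      refine ⟨i, (hchar i f g).mpr hi, ?_⟩
      intro j hj
      by_contra hne'
      exact hdisj j i hne' _ ((hchar j f g).mp hj) hi
    · rintro ⟨m, w, p, hEuler, hUniq⟩
      have hmk : ∀ i : Fin m, ∃ (E : X.edgeSet) (cc : X.lineGraph.Walk E E),
          cc.IsHamiltonianCycle ∧
          (∀ f g : X.edgeSet,
            s(f, g) ∈ cc.edges ↔ EKAux.CycAdj (p i).edges (f : Sym2 W) (g : Sym2 W)) ∧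
          (∀ (u v : W) (E' : X.edgeSet), (E' : Sym2 W) = s(u, v) → CompatAt cc E' u v) :=
        fun i => EKAux.dir2core (p i) (hEuler i) hne
      choose x c hham hchar hcompat using hmk
      refine ⟨m, x, c, ⟨fun i => EKAux.ham_cast (hham i), ?_⟩, ?_, ?_⟩
      · intro i j hij e
        induction e using Sym2.ind with
        | _ f g =>
          intro hei hej
          have hadj : X.lineGraph.Adj f g :=
            (X.lineGraph.mem_edgeSet).mp ((c i).edges_subset_edgeSet hei)
          obtain ⟨i₀, -, huniq⟩ := hUniq f g hadj
          exact hij ((huniq i ((hchar i f g).mp hei)).trans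
            (huniq j ((hchar j f g).mp hej)).symm)
      · intro e
        induction e using Sym2.ind with
        | _ f g =>
          intro he
          obtain ⟨i, hi, -⟩ := hUniq f g ((X.lineGraph.mem_edgeSet).mp he)
          exact ⟨i, (hchar i f g).mpr hi⟩
      · exact fun i u v E hE => hcompat i u v E hE
end
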